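/- arXiv:1806.09876 — 4 statements merged into one kernel-verified Lean document; each statement's English description precedes it below -/
import Mathlib

section
/- Let X be a pretree with ternary relation ⟨·,·,·⟩ and let u, w, v, x, y ∈ X be such that ⟨u,w,v⟩ holds, ⟨x,w,u⟩ does not hold, and ⟨y,w,v⟩ does not hold. Then ⟨x,w,y⟩ holds. (Equivalently: if w ∈ [u,v], x ∉ S_w^u and y ∉ S_w^v, then w ∈ [x,y], where S_w^z = {p : w ∈ [p,z]} denotes the shadow cast by w from light source z.) -/
/-- A pretree: a ternary relation `R` satisfying the axioms (B1), (B2), (B3). -/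
structure IsPretree {X : Type*} (R : X → X → X → Prop) : Prop where
  b1 : ∀ a b c : X, R a b c → R c b a
  b2 : ∀ a b c : X, (R a b c ∧ R a c b) ↔ b = c
  b3 : ∀ a b c d : X, R a b c → R a b d ∨ R d b c

/-- In a pretree, if `⟨u,w,v⟩` holds while `⟨x,w,u⟩` and `⟨y,w,v⟩` fail,
then `⟨x,w,y⟩` holds. -/
theorem stmt_15 {X : Type*} (R : X → X → X → Prop) (hR : IsPretree R)
    (u w v x y : X) (h1 : R u w v) (h2 : ¬ R x w u) (h3 : ¬ R y w v) :
    R x w y := by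
  have hx : R x w v := by
    rcases hR.b3 u w v x h1 with h | h
    · exact absurd (hR.b1 _ _ _ h) h2
    · exact h
  rcases hR.b3 x w v y hx with h | h
  · exact h
  · exact absurd h h3
end

section
/- Let X be a median pretree, let u, v ∈ X, and let w ∈ [u,v] with w ≠ v. Then for every x ∈ X and every point m ∈ [u,x] ∩ [x,v] ∩ [u,v] (a median of u, x, v), one has: m ∈ [u,w] if and only if w ∈ [x,v]. (Equivalently, the preimage of [u,w] under the median retraction x ↦ m(u,x,v) equals the shadow S_w^v = {x : w ∈ [x,v]}.) -/
/-- A median pretree: a pretree in which `[a,b] ∩ [a,c] ∩ [b,c] ≠ ∅` for all `a, b, c`. -/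
def IsMedianPretree {X : Type*} (R : X → X → X → Prop) : Prop :=
  IsPretree R ∧ ∀ a b c : X, ∃ m : X, R a m b ∧ R a m c ∧ R b m c

/-- Endpoints belong to intervals: `R a c c`. -/
lemma pretree_endpoint {X : Type*} {R : X → X → X → Prop} (h : IsPretree R)
    (a c : X) : R a c c :=
  (((h.b2 a c c).mpr rfl)).1

/-- If `b ∈ [a,c]` and `d ∈ [b,c]` then `d ∈ [a,c]`. -/
lemma pretree_trans {X : Type*} {R : X → X → X → Prop} (h : IsPretree R)
    {a b c d : X} (h1 : R a b c) (h2 : R b d c) : R a d c := by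
  rcases h.b3 a b c d h1 with h3 | h3
  · rcases h.b3 b d c a h2 with h4 | h4
    · have : d = b := (h.b2 a d b).mp ⟨h.b1 b d a h4, h3⟩
      rwa [this]
    · exact h4
  · have : b = d := (h.b2 c b d).mp ⟨h.b1 d b c h3, h.b1 b d c h2⟩
    rwa [← this]

/-- In a median pretree, for `w ∈ [u,v]` with `w ≠ v`, for every `x` and
every median `m` of `u, x, v`:  `m ∈ [u,w]` iff `w ∈ [x,v]`.  (The preimage of `[u,w]` under
the median retraction `x ↦ m(u,x,v)` is the shadow `S_w^v`.) -/
theorem stmt_16 {X : Type*} (R : X → X → X → Prop) (hR : IsMedianPretree R)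
    (u v w : X) (hw : R u w v) (hwv : w ≠ v)
    (x m : X) (hm₁ : R u m x) (hm₂ : R x m v) (hm₃ : R u m v) :
    R u m w ↔ R x w v := by
  obtain ⟨hP, -⟩ := hR
  constructor
  · intro humw
    -- show w ∈ [m,v], then compose with x m v
    rcases hP.b3 u w v m hw with h1 | h1
    · have : w = m := (hP.b2 u w m).mp ⟨h1, humw⟩
      rwa [this]
    · exact pretree_trans hP hm₂ h1
  · intro hxwv
    rcases hP.b3 u m v w hm₃ with h1 | h1
    · exact h1
    · -- h1 : R w m v
      rcases hP.b3 x w v m hxwv with h2 | h2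
      · -- h2 : R x w m
        rcases hP.b3 u m x w hm₁ with h3 | h3
        · exact h3
        · -- h3 : R w m x, combined with h2 gives m = w
          have : w = m := (hP.b2 x w m).mp ⟨h2, hP.b1 w m x h3⟩
          rw [← this]
          exact pretree_endpoint hP u w
      · -- h2 : R m w v, with h1 : R w m v gives m = w
        have : m = w := (hP.b2 v m w).mp ⟨hP.b1 w m v h1, hP.b1 m w v h2⟩
        rw [this]
        exact pretree_endpoint hP u w
end

section
/- Let X be a pretree and let τ_s be its shadow topology, i.e. the topology on X generated by taking the complements of the shadows S_u^v = {x : u ∈ [x,v]} (for all pairs u ≠ v) as an open subbase (so that the shadows form a subbase for the closed sets). If (X, τ_s) is compact and Hausdorff, then every monotone function f : X → ℝ (i.e., ⟨u,w,v⟩ implies min(f(u), f(v)) ≤ f(w) ≤ max(f(u), f(v))) is fragmented: for every nonempty τ_s-closed subset Y ⊆ X the restriction f|_Y has at least one point of continuity. -/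
/-- The shadow topology of a pretree: the complements of the shadows
`S_u^v = {x | u ∈ [x,v]}` (for `u ≠ v`) form an open subbase, i.e. the shadows form a
subbase for the closed sets. -/
def shadowTopology {X : Type*} (R : X → X → X → Prop) : TopologicalSpace X :=
  TopologicalSpace.generateFrom {S : Set X | ∃ u v : X, u ≠ v ∧ S = {x : X | R x u v}ᶜ}

/-!
For a monotone `f` and a rational `q`, the sublevel set `C = {f ≤ q}` and its complement are
convex. If a nonempty set `A` lay in the closures of both `A ∩ C` and `A \ C`, then `A` would have
no isolated points and lie in the frontier of `C`, which forces all intervals between points of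
`A` to be trivial; then every subbasic open set meeting `A` contains all of `A` but one point, so
by the Hausdorff property `A` is finite, a contradiction. Hence inside a closed set `Y` the
frontiers of these sublevel sets have empty interior, and by Baire's theorem on the compact space
`Y` some point avoids all of them; there `f|Y` is continuous.
-/

open Filter Topology

namespace IsPretree

variable {X : Type*} {R : X → X → X → Prop}

lemma rel_self_right (hR : IsPretree R) (a b : X) : R a b b :=
  ((hR.b2 a b b).mpr rfl).1

lemma eq_of_rel_self (hR : IsPretree R) {a y : X} (h : R a y a) : y = a :=
  (hR.b2 a y a).mp ⟨h, hR.b1 _ _ _ (hR.rel_self_right y a)⟩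

end IsPretree

lemma Set.finite_of_forall_cofinite_inf_principal_le_nhds {X : Type*} [TopologicalSpace X]
    [T2Space X] {A : Set X} (h : ∀ a ∈ A, cofinite ⊓ 𝓟 A ≤ 𝓝 a) : A.Finite := by
  by_contra hA
  obtain ⟨c, hc, d, hd, hcd⟩ := Set.Infinite.nontrivial hA
  have hbot : cofinite ⊓ 𝓟 A = ⊥ :=
    le_bot_iff.mp ((le_inf (h c hc) (h d hd)).trans (disjoint_nhds_nhds.mpr hcd).le_bot)
  rw [inf_principal_eq_bot, mem_cofinite, compl_compl] at hbot
  exact hA hbot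

lemma continuousAt_of_forall_notMem_frontier_setOf_le {Y : Type*} [TopologicalSpace Y]
    {g : Y → ℝ} {y : Y} (h : ∀ q : ℚ, y ∉ frontier {x | g x ≤ q}) : ContinuousAt g y := by
  refine tendsto_order.2 ⟨fun a ha => ?_, fun b hb => ?_⟩
  · obtain ⟨q, haq, hqy⟩ := exists_rat_btwn ha
    have hy : y ∉ closure {x | g x ≤ q} := fun hc =>
      h q ⟨hc, fun hi => hqy.not_ge (interior_subset (s := {x | g x ≤ q}) hi)⟩
    filter_upwards [isClosed_closure.isOpen_compl.mem_nhds hy] with x hx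
    exact haq.trans (not_le.mp fun hle => hx (subset_closure hle))
  · obtain ⟨q, hyq, hqb⟩ := exists_rat_btwn hb
    have hy : y ∈ interior {x | g x ≤ q} := by_contra fun hi => h q ⟨subset_closure hyq.le, hi⟩
    filter_upwards [mem_interior_iff_mem_nhds.mp hy] with x hx
    exact (hx : g x ≤ q).trans_lt hqb

lemma exists_forall_notMem_frontier {Y ι : Type*} [TopologicalSpace Y] [BaireSpace Y]
    [Nonempty Y] [Countable ι] {D : ι → Set Y} (hD : ∀ i, interior (frontier (D i)) = ∅) :
    ∃ y, ∀ i, y ∉ frontier (D i) := by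
  obtain ⟨y, hy⟩ := (dense_iInter_of_isOpen (fun i => isClosed_frontier.isOpen_compl)
    fun i => interior_eq_empty_iff_dense_compl.mp (hD i)).nonempty
  exact ⟨y, Set.mem_iInter.mp hy⟩

namespace Pretree

variable {X : Type*} {R : X → X → X → Prop}

def IsConvex (R : X → X → X → Prop) (S : Set X) : Prop :=
  ∀ ⦃u⦄, u ∈ S → ∀ ⦃v⦄, v ∈ S → ∀ ⦃w⦄, R u w v → w ∈ S

lemma isConvex_setOf_le {f : X → ℝ}
    (hf : ∀ u w v, R u w v → min (f u) (f v) ≤ f w ∧ f w ≤ max (f u) (f v)) (r : ℝ) :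
    IsConvex R {x | f x ≤ r} := fun _ hu _ hv _ hw =>
  (hf _ _ _ hw).2.trans (max_le hu hv)

lemma isConvex_compl_setOf_le {f : X → ℝ}
    (hf : ∀ u w v, R u w v → min (f u) (f v) ≤ f w ∧ f w ≤ max (f u) (f v)) (r : ℝ) :
    IsConvex R {x | f x ≤ r}ᶜ := by
  intro u hu v hv w hw
  simp only [Set.mem_compl_iff, Set.mem_ofPred_eq, not_le] at hu hv ⊢
  exact (lt_min hu hv).trans_le (hf u w v hw).1

lemma rel_of_rel_of_intervals_trivial (hR : IsPretree R) {A : Set X}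
    (hA : ∀ a ∈ A, ∀ b ∈ A, ∀ w, R a w b → w = a ∨ w = b) {u v z₁ z₂ : X}
    (hz₁ : z₁ ∈ A) (hz₂ : z₂ ∈ A) (hz₁u : z₁ ≠ u) (hz₂u : z₂ ≠ u) (h : R z₁ u v) : R z₂ u v := by
  rcases hR.b3 z₁ u v z₂ h with h' | h'
  · rcases hA z₁ hz₁ z₂ hz₂ u h' with rfl | rfl <;> contradiction
  · exact h'

section ShadowTopology

variable [t : TopologicalSpace X]

lemma isOpen_compl_shadow (ht : t = shadowTopology R) {u v : X} (huv : u ≠ v) :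
    IsOpen {x | R x u v}ᶜ := by
  subst ht
  exact TopologicalSpace.GenerateOpen.basic _ ⟨u, v, huv, rfl⟩

lemma eq_or_mem_of_mem_closure (hR : IsPretree R) (ht : t = shadowTopology R) {S : Set X}
    (hS : IsConvex R S) {b c y : X} (hb : b ∈ closure S) (hc : c ∈ S) (hy : R b y c) :
    y = b ∨ y ∈ S := by
  by_contra! h
  -- the complement of the shadow `S_y^b` is an open neighbourhood of `b`
  obtain ⟨p, hpy, hp⟩ : ({x | R x y b}ᶜ ∩ S).Nonempty :=
    mem_closure_iff.mp hb _ (isOpen_compl_shadow ht h.1) fun hb' => h.1 (hR.eq_of_rel_self hb')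
  rcases hR.b3 b y c p hy with h' | h'
  · exact hpy (hR.b1 _ _ _ h')
  · exact h.2 (hS hp hc h')

lemma eq_or_eq_or_mem_of_mem_closure (hR : IsPretree R) (ht : t = shadowTopology R) {S : Set X}
    (hS : IsConvex R S) {a₁ a₂ w : X} (h₁ : a₁ ∈ closure S) (h₂ : a₂ ∈ closure S)
    (hw : R a₁ w a₂) : w = a₁ ∨ w = a₂ ∨ w ∈ S := by
  obtain ⟨d, hd⟩ := closure_nonempty_iff.mp ⟨a₁, h₁⟩
  rcases hR.b3 a₁ w a₂ d hw with h | h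
  · exact (eq_or_mem_of_mem_closure hR ht hS h₁ hd h).imp_right Or.inr
  · exact Or.inr (eq_or_mem_of_mem_closure hR ht hS h₂ hd (hR.b1 _ _ _ h))

lemma eq_or_eq_of_mem_frontier (hR : IsPretree R) (ht : t = shadowTopology R) {C : Set X}
    (hC : IsConvex R C) (hC' : IsConvex R Cᶜ) {a₁ a₂ w : X} (h₁ : a₁ ∈ frontier C)
    (h₂ : a₂ ∈ frontier C) (hw : R a₁ w a₂) : w = a₁ ∨ w = a₂ := by
  rw [frontier_eq_closure_inter_closure] at h₁ h₂
  by_cases hwC : w ∈ C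
  · simpa [hwC] using eq_or_eq_or_mem_of_mem_closure hR ht hC' h₁.2 h₂.2 hw
  · simpa [hwC] using eq_or_eq_or_mem_of_mem_closure hR ht hC h₁.1 h₂.1 hw

/-- Every shadow complement containing a point of `A` contains all of `A` but at most one point. -/
lemma cofinite_inf_principal_le_nhds (hR : IsPretree R) (ht : t = shadowTopology R) {A : Set X}
    (hA : ∀ a ∈ A, ∀ b ∈ A, ∀ w, R a w b → w = a ∨ w = b) (hperf : Preperfect A) {a : X}
    (ha : a ∈ A) : cofinite ⊓ 𝓟 A ≤ 𝓝 a := by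
  have hacc : ∀ {u v : X}, u ≠ v → a ∈ {x | R x u v}ᶜ → ∃ y ∈ {x | R x u v}ᶜ ∩ A, y ≠ a :=
    fun huv has => preperfect_iff_nhds.mp hperf a ha _ ((isOpen_compl_shadow ht huv).mem_nhds has)
  subst ht
  rw [shadowTopology, TopologicalSpace.nhds_generateFrom]
  refine le_iInf₂ fun s ⟨has, u, v, huv, hs⟩ => le_principal_iff.mpr ?_
  subst hs
  refine mem_inf_principal.mpr (mem_of_superset (Set.finite_singleton u).compl_mem_cofinite ?_)
  intro z hzu hzA hz
  obtain ⟨y, ⟨hys, hyA⟩, hya⟩ := hacc huv has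
  have hu : ∀ x ∈ A, x ∈ {x | R x u v}ᶜ → x = u := fun x hx hxs => by_contra fun hxu =>
    hxs (rel_of_rel_of_intervals_trivial hR hA hzA hx hzu hxu hz)
  exact hya ((hu y hyA hys).trans (hu a ha has).symm)

lemma false_of_subset_closure_inter_of_subset_closure_diff (hR : IsPretree R)
    (ht : t = shadowTopology R) [T2Space X] {C : Set X} (hC : IsConvex R C) (hC' : IsConvex R Cᶜ)
    {A : Set X} (hA : A.Nonempty) (hAC : A ⊆ closure (A ∩ C)) (hAC' : A ⊆ closure (A \ C)) :
    False := by
  have hfrontier : A ⊆ frontier C := fun a ha => by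
    rw [frontier_eq_closure_inter_closure]
    exact ⟨closure_mono Set.inter_subset_right (hAC ha),
      closure_mono (fun x hx => hx.2) (hAC' ha)⟩
  have hperf : Preperfect A := by
    intro a ha
    have hacc : ∀ B ⊆ A, a ∈ closure B → a ∉ B → AccPt a (𝓟 A) := fun B hB haB ha' =>
      derivedSet_mono B A hB (((closure_eq_self_union_derivedSet B).subset haB).resolve_left ha')
    by_cases haC : a ∈ C
    · exact hacc _ Set.sdiff_subset (hAC' ha) fun h => h.2 haC
    · exact hacc _ Set.inter_subset_left (hAC ha) fun h => haC h.2
  have htrivial : ∀ a ∈ A, ∀ b ∈ A, ∀ w, R a w b → w = a ∨ w = b := fun a ha b hb _ hw =>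
    eq_or_eq_of_mem_frontier hR ht hC hC' (hfrontier ha) (hfrontier hb) hw
  have hfinite : A.Finite := Set.finite_of_forall_cofinite_inf_principal_le_nhds fun a ha =>
    cofinite_inf_principal_le_nhds hR ht htrivial hperf ha
  obtain ⟨a, ha⟩ := hA
  exact Set.Infinite.of_accPt (hperf a ha) hfinite

lemma interior_frontier_preimage_val_eq_empty (hR : IsPretree R) (ht : t = shadowTopology R)
    [T2Space X] {C : Set X} (hC : IsConvex R C) (hC' : IsConvex R Cᶜ) (Y : Set X) :
    interior (frontier (Subtype.val ⁻¹' C : Set Y)) = ∅ := by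
  set W := interior (frontier (Subtype.val ⁻¹' C : Set Y))
  rw [← Set.not_nonempty_iff_eq_empty]
  intro hW
  have hWfr : W ⊆ closure (Subtype.val ⁻¹' C) ∩ closure (Subtype.val ⁻¹' C)ᶜ :=
    frontier_eq_closure_inter_closure (s := Subtype.val ⁻¹' C) ▸ interior_subset
  refine false_of_subset_closure_inter_of_subset_closure_diff hR ht hC hC'
    (hW.image Subtype.val) ?_ ?_
  · rintro _ ⟨w, hw, rfl⟩
    rw [← Set.image_inter_preimage]
    exact closure_subtype.mp (isOpen_interior.inter_closure ⟨hw, (hWfr hw).1⟩)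
  · rintro _ ⟨w, hw, rfl⟩
    rw [Set.sdiff_eq, ← Set.image_inter_preimage]
    exact closure_subtype.mp (isOpen_interior.inter_closure ⟨hw, (hWfr hw).2⟩)

end ShadowTopology

end Pretree

/-- If the shadow topology of a pretree is compact Hausdorff, then every
monotone real-valued function on it is fragmented: its restriction to every nonempty closed
subset has a point of continuity. -/
theorem stmt_17 {X : Type*} (R : X → X → X → Prop) (hR : IsPretree R)
    (hcomp : @CompactSpace X (shadowTopology R))
    (ht2 : @T2Space X (shadowTopology R))
    (f : X → ℝ)
    (hmono : ∀ u w v : X, R u w v → min (f u) (f v) ≤ f w ∧ f w ≤ max (f u) (f v)) :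
    ∀ Y : Set X, Y.Nonempty → @IsClosed X (shadowTopology R) Y →
      ∃ y ∈ Y, @ContinuousWithinAt X ℝ (shadowTopology R) _ f Y y := by
  let _ := shadowTopology R
  intro Y hY hYclosed
  have : CompactSpace Y := isCompact_iff_compactSpace.mp hYclosed.isCompact
  have : Nonempty Y := hY.to_subtype
  obtain ⟨y, hy⟩ := exists_forall_notMem_frontier fun q : ℚ =>
    Pretree.interior_frontier_preimage_val_eq_empty hR rfl
      (Pretree.isConvex_setOf_le hmono q) (Pretree.isConvex_compl_setOf_le hmono q) Y
  exact ⟨y, y.2, (continuousWithinAt_iff_continuousAt_domRestrict f y.2).mpr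
    (continuousAt_of_forall_notMem_frontier_setOf_le hy)⟩
end

section
/- Let X be a nonempty dendrite (a metrizable dendron) and let G be a group acting on X by homeomorphisms such that every G-orbit in X is infinite. Then the action is proximal: for every pair of points x, y ∈ X, the closure in X × X of the set {(g • x, g • y) : g ∈ G} contains a point of the diagonal {(z, z) : z ∈ X}. -/
/-- A point `w` separates the points `u` and `v` in a topological space `X` if the complement
of `{w}` is the union of two disjoint open sets, one containing `u` and the other `v`. -/
def Separates {X : Type*} [TopologicalSpace X] (w u v : X) : Prop :=
  ∃ U V : Set X, IsOpen U ∧ IsOpen V ∧ u ∈ U ∧ v ∈ V ∧ Disjoint U V ∧ ({w}ᶜ : Set X) = U ∪ V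

namespace S18

variable {X : Type*} [TopologicalSpace X]

/-- A "wall" at `w`: a decomposition of the complement of `w` into two disjoint open sets. -/
def Wall (w : X) (U V : Set X) : Prop :=
  IsOpen U ∧ IsOpen V ∧ Disjoint U V ∧ ({w}ᶜ : Set X) = U ∪ V

theorem separates_iff {w u v : X} :
    Separates w u v ↔ ∃ U V : Set X, Wall w U V ∧ u ∈ U ∧ v ∈ V := by
  constructor
  · rintro ⟨U, V, h1, h2, h3, h4, h5, h6⟩; exact ⟨U, V, ⟨h1, h2, h5, h6⟩, h3, h4⟩
  · rintro ⟨U, V, ⟨h1, h2, h5, h6⟩, h3, h4⟩; exact ⟨U, V, h1, h2, h3, h4, h5, h6⟩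

namespace Wall

variable {w : X} {U V : Set X}

theorem symm (h : Wall w U V) : Wall w V U :=
  ⟨h.2.1, h.1, h.2.2.1.symm, by rw [h.2.2.2, Set.union_comm]⟩

theorem notMem_left (h : Wall w U V) : w ∉ U := by
  intro hw
  have : w ∈ ({w}ᶜ : Set X) := h.2.2.2 ▸ Set.mem_union_left _ hw
  simp at this

theorem notMem_right (h : Wall w U V) : w ∉ V := h.symm.notMem_left

theorem ne_of_mem_left (h : Wall w U V) {u : X} (hu : u ∈ U) : u ≠ w := by
  rintro rfl; exact h.notMem_left hu

theorem ne_of_mem_right (h : Wall w U V) {v : X} (hv : v ∈ V) : v ≠ w :=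
  h.symm.ne_of_mem_left hv

theorem cover (h : Wall w U V) (x : X) : x = w ∨ x ∈ U ∨ x ∈ V := by
  by_cases hx : x = w
  · exact Or.inl hx
  · right
    have : x ∈ ({w}ᶜ : Set X) := by simpa using hx
    rw [h.2.2.2] at this
    exact this

theorem mem_of_not_left (h : Wall w U V) {x : X} (hw : x ≠ w) (hU : x ∉ U) : x ∈ V := by
  rcases h.cover x with h1 | h1 | h1
  · exact absurd h1 hw
  · exact absurd h1 hU
  · exact h1

/-- The closed side `V ∪ {w}` equals `Uᶜ`. -/
theorem compl_left (h : Wall w U V) : Uᶜ = V ∪ {w} := by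
  ext x
  simp only [Set.mem_compl_iff, Set.mem_union, Set.mem_singleton_iff]
  constructor
  · intro hx
    rcases h.cover x with h1 | h1 | h1
    · exact Or.inr h1
    · exact absurd h1 hx
    · exact Or.inl h1
  · rintro (h1 | rfl)
    · exact fun hx => h.2.2.1.ne_of_mem hx h1 rfl
    · exact h.notMem_left

theorem isClosed_right (h : Wall w U V) : IsClosed (V ∪ {w}) := by
  rw [← h.compl_left]; exact isClosed_compl_iff.mpr h.1

theorem isClosed_left (h : Wall w U V) : IsClosed (U ∪ {w}) := h.symm.isClosed_right

/-- A preconnected set avoiding `w` which meets `U` is contained in `U`. -/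
theorem preconn_subset_left (h : Wall w U V) {C : Set X} (hC : IsPreconnected C)
    (hw : w ∉ C) (hne : (C ∩ U).Nonempty) : C ⊆ U := by
  intro x hx
  by_contra hxU
  have hxV : x ∈ V := h.mem_of_not_left (fun hxw => hw (hxw ▸ hx)) hxU
  have hsub : C ⊆ U ∪ V := by
    intro y hy
    rcases h.cover y with h1 | h1 | h1
    · exact absurd (h1 ▸ hy) hw
    · exact Or.inl h1
    · exact Or.inr h1
  have := hC U V h.1 h.2.1 hsub hne ⟨x, hx, hxV⟩
  rcases this with ⟨y, _, hyU, hyV⟩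
  exact h.2.2.1.ne_of_mem hyU hyV rfl

theorem preconn_subset_right (h : Wall w U V) {C : Set X} (hC : IsPreconnected C)
    (hw : w ∉ C) (hne : (C ∩ V).Nonempty) : C ⊆ V :=
  h.symm.preconn_subset_left hC hw hne

/-- A preconnected set meeting both sides of a wall contains the wall point. -/
theorem mem_of_cross (h : Wall w U V) {C : Set X} (hC : IsPreconnected C)
    (hU : (C ∩ U).Nonempty) (hV : (C ∩ V).Nonempty) : w ∈ C := by
  by_contra hw
  have := h.preconn_subset_left hC hw hU
  rcases hV with ⟨y, hyC, hyV⟩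
  exact h.2.2.1.ne_of_mem (this hyC) hyV rfl

end Wall

theorem sep_mem_of_preconn {w u v : X} (h : Separates w u v) {C : Set X}
    (hC : IsPreconnected C) (hu : u ∈ C) (hv : v ∈ C) : w ∈ C := by
  rw [separates_iff] at h
  obtain ⟨U, V, hw, huU, hvV⟩ := h
  exact hw.mem_of_cross hC ⟨u, hu, huU⟩ ⟨v, hv, hvV⟩

end S18

namespace S18

variable {X : Type*} [TopologicalSpace X]

section Sides

variable [ConnectedSpace X]

private theorem side_preconn_aux {w : X} {U V : Set X} (h : Wall w U V)
    {O₁ O₂ : Set X} (hO₁ : IsOpen O₁) (hO₂ : IsOpen O₂)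
    (hcov : V ∪ {w} ⊆ O₁ ∪ O₂) (hne₂ : ((V ∪ {w}) ∩ O₂).Nonempty)
    (hw₁ : w ∈ O₁) (hemp : ((V ∪ {w}) ∩ (O₁ ∩ O₂)) = ∅) : False := by
  set T : Set X := V ∪ {w} with hT
  have hwO₂ : w ∉ O₂ := by
    intro hw2
    have : w ∈ T ∩ (O₁ ∩ O₂) := ⟨Or.inr rfl, hw₁, hw2⟩
    rw [hemp] at this; exact this
  -- T ∩ O₂ = V ∩ O₂ is clopen
  have hTO₂ : T ∩ O₂ = V ∩ O₂ := by
    ext x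
    simp only [hT, Set.mem_inter_iff, Set.mem_union, Set.mem_singleton_iff]
    constructor
    · rintro ⟨h1 | rfl, h2⟩
      · exact ⟨h1, h2⟩
      · exact absurd h2 hwO₂
    · rintro ⟨h1, h2⟩; exact ⟨Or.inl h1, h2⟩
  have hopen : IsOpen (T ∩ O₂) := by rw [hTO₂]; exact h.2.1.inter hO₂
  have hclosed : IsClosed (T ∩ O₂) := by
    have : T ∩ O₂ = T ∩ O₁ᶜ := by
      apply Set.Subset.antisymm
      · intro x ⟨hx1, hx2⟩
        refine ⟨hx1, fun hx3 => ?_⟩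
        have : x ∈ T ∩ (O₁ ∩ O₂) := ⟨hx1, hx3, hx2⟩
        rw [hemp] at this; exact this
      · intro x ⟨hx1, hx2⟩
        rcases hcov hx1 with h1 | h1
        · exact absurd h1 hx2
        · exact ⟨hx1, h1⟩
    rw [this]
    exact h.isClosed_right.inter (isClosed_compl_iff.mpr hO₁)
  rcases isClopen_iff.mp ⟨hclosed, hopen⟩ with hcase | hcase
  · rw [hcase] at hne₂; exact Set.not_nonempty_empty hne₂
  · have : w ∈ T ∩ O₂ := by rw [hcase]; trivial
    exact hwO₂ this.2

/-- In a connected space, the closed side `V ∪ {w}` of a wall is preconnected. -/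
theorem Wall.preconn_right {w : X} {U V : Set X} (h : Wall w U V) :
    IsPreconnected (V ∪ {w}) := by
  intro O₁ O₂ hO₁ hO₂ hcov hne₁ hne₂
  by_contra hemp
  rw [Set.not_nonempty_iff_eq_empty] at hemp
  have hw : w ∈ V ∪ {w} := Or.inr rfl
  rcases hcov hw with hw1 | hw2
  · exact side_preconn_aux h hO₁ hO₂ hcov hne₂ hw1 hemp
  · refine side_preconn_aux h hO₂ hO₁ ?_ hne₁ hw2 ?_
    · rw [Set.union_comm O₂ O₁]; exact hcov
    · rw [Set.inter_comm O₂ O₁]; exact hemp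

theorem Wall.preconn_left {w : X} {U V : Set X} (h : Wall w U V) :
    IsPreconnected (U ∪ {w}) := h.symm.preconn_right

/-- Cutting a closed preconnected set by the closed side of a wall through one of its points
keeps it preconnected. -/
theorem Wall.side_cut {w : X} {U V : Set X} (h : Wall w U V) {C : Set X}
    (hCc : IsClosed C) (hCp : IsPreconnected C) (hwC : w ∈ C) :
    IsPreconnected (C ∩ (V ∪ {w})) := by
  rw [isPreconnected_closed_iff]
  intro F₁ F₂ hF₁ hF₂ hcov hne₁ hne₂
  by_contra hemp
  rw [Set.not_nonempty_iff_eq_empty] at hemp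
  set T : Set X := C ∩ (V ∪ {w}) with hT
  have hTclosed : IsClosed T := hCc.inter h.isClosed_right
  have hwT : w ∈ T := ⟨hwC, Or.inr rfl⟩
  -- wlog w ∈ F₁ : handle by symmetry manually
  have main : ∀ F₁' F₂' : Set X, IsClosed F₁' → IsClosed F₂' → T ⊆ F₁' ∪ F₂' →
      (T ∩ F₂').Nonempty → (T ∩ (F₁' ∩ F₂')) = ∅ → w ∈ F₁' → False := by
    intro G₁ G₂ hG₁ hG₂ hcov' hne₂' hemp' hwG₁
    -- shrink
    set H₁ : Set X := G₁ ∩ T with hH₁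
    set H₂ : Set X := G₂ ∩ T with hH₂
    have hH₁c : IsClosed H₁ := hG₁.inter hTclosed
    have hH₂c : IsClosed H₂ := hG₂.inter hTclosed
    have hclU : closure U ⊆ U ∪ {w} := by
      have : closure U ⊆ Vᶜ := by
        rw [Set.subset_compl_iff_disjoint_left]
        exact h.2.2.1.symm.closure_right h.2.1
      intro x hx
      rcases h.cover x with h1 | h1 | h1
      · exact Or.inr h1
      · exact Or.inl h1
      · exact absurd h1 (this hx)
    have hCcov : C ⊆ (H₁ ∪ closure U) ∪ H₂ := by
      intro c hc
      rcases h.cover c with h1 | h1 | h1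
      · have : c ∈ T := ⟨hc, Or.inr h1⟩
        rcases hcov' this with h2 | h2
        · exact Or.inl (Or.inl ⟨h2, this⟩)
        · exact Or.inr ⟨h2, this⟩
      · exact Or.inl (Or.inr (subset_closure h1))
      · have : c ∈ T := ⟨hc, Or.inl h1⟩
        rcases hcov' this with h2 | h2
        · exact Or.inl (Or.inl ⟨h2, this⟩)
        · exact Or.inr ⟨h2, this⟩
    have hCne₁ : (C ∩ (H₁ ∪ closure U)).Nonempty :=
      ⟨w, hwC, Or.inl ⟨hwG₁, hwT⟩⟩
    have hCne₂ : (C ∩ H₂).Nonempty := by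
      rcases hne₂' with ⟨t, htT, htG₂⟩
      exact ⟨t, htT.1, htG₂, htT⟩
    have := (isPreconnected_closed_iff.mp hCp) (H₁ ∪ closure U) H₂
      (hH₁c.union isClosed_closure) hH₂c hCcov hCne₁ hCne₂
    rcases this with ⟨p, hpC, hp1, hp2⟩
    have hpT : p ∈ T := hp2.2
    rcases hp1 with hp1 | hp1
    · have : p ∈ T ∩ (G₁ ∩ G₂) := ⟨hpT, hp1.1, hp2.1⟩
      rw [hemp'] at this; exact this
    · -- p ∈ closure U ⊆ U ∪ {w}, but p ∈ T ⊆ V ∪ {w}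
      rcases hclU hp1 with h1 | h1
      · rcases hpT.2 with h2 | h2
        · exact h.2.2.1.ne_of_mem h1 h2 rfl
        · exact h.notMem_left (h2 ▸ h1)
      · -- p = w ∈ G₂, and w ∈ G₁
        have : p ∈ T ∩ (G₁ ∩ G₂) := ⟨hpT, h1 ▸ hwG₁, hp2.1⟩
        rw [hemp'] at this; exact this
  rcases hcov hwT with hw1 | hw2
  · exact main F₁ F₂ hF₁ hF₂ hcov hne₂ hemp hw1
  · refine main F₂ F₁ hF₂ hF₁ ?_ hne₁ ?_ hw2
    · rw [Set.union_comm]; exact hcov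
    · rw [Set.inter_comm F₂ F₁]; exact hemp

end Sides

end S18

namespace S18

set_option linter.unusedSectionVars false

variable {X : Type*} [TopologicalSpace X]

/-- The connected component of `z` in the complement of `w`. -/
def comp (z w : X) : Set X := connectedComponentIn ({w}ᶜ : Set X) z

theorem comp_preconn (z w : X) : IsPreconnected (comp z w) :=
  isPreconnected_connectedComponentIn

theorem comp_not_mem (z w : X) : w ∉ comp z w := by
  intro h
  have := connectedComponentIn_subset ({w}ᶜ : Set X) z h
  simp at this

theorem mem_comp_self {z w : X} (h : z ≠ w) : z ∈ comp z w :=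
  mem_connectedComponentIn (by simpa using h)

theorem preconn_subset_comp {z w : X} {C : Set X} (hC : IsPreconnected C)
    (hz : z ∈ C) (hw : w ∉ C) : C ⊆ comp z w :=
  hC.subset_connectedComponentIn hz (by intro x hx; simp; rintro rfl; exact hw hx)

theorem comp_subset_left {z w : X} {U V : Set X} (h : Wall w U V) (hz : z ∈ U) :
    comp z w ⊆ U :=
  h.preconn_subset_left (comp_preconn z w) (comp_not_mem z w)
    ⟨z, mem_comp_self (h.ne_of_mem_left hz), hz⟩

theorem comp_subset_right {z w : X} {U V : Set X} (h : Wall w U V) (hz : z ∈ V) :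
    comp z w ⊆ V := comp_subset_left h.symm hz

/-- Closure of a component of the complement of a point adds at most that point. -/
theorem closure_comp_subset (z w : X) : closure (comp z w) ⊆ comp z w ∪ {w} := by
  intro t ht
  by_cases htw : t = w
  · exact Or.inr htw
  · left
    by_cases hzw : z = w
    · -- comp z w might be empty; then closure empty
      subst hzw
      have : comp z z = ∅ := by
        rw [comp, connectedComponentIn_eq_empty]
        simp
      rw [this] at ht; simp at ht
    have hpre : IsPreconnected (comp z w ∪ {t}) := by
      have h1 : IsPreconnected (closure (comp z w)) := (comp_preconn z w).closure
      exact (comp_preconn z w).subset_closure Set.subset_union_left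
        (by
          intro x hx
          rcases hx with hx | hx
          · exact subset_closure hx
          · rcases hx with rfl; exact ht)
    have : comp z w ∪ {t} ⊆ comp z w := by
      apply preconn_subset_comp hpre
      · exact Or.inl (mem_comp_self hzw)
      · rintro (h1 | h1)
        · exact comp_not_mem z w h1
        · exact htw h1.symm
    exact this (Or.inr rfl)

/-- The "segment" between `a` and `b`: the intersection of all closed preconnected sets
containing both. -/
def seg (a b : X) : Set X := ⋂₀ {C : Set X | IsClosed C ∧ IsPreconnected C ∧ a ∈ C ∧ b ∈ C}

theorem seg_subset {a b : X} {C : Set X} (h1 : IsClosed C) (h2 : IsPreconnected C)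
    (ha : a ∈ C) (hb : b ∈ C) : seg a b ⊆ C :=
  Set.sInter_subset_of_mem ⟨h1, h2, ha, hb⟩

theorem isClosed_seg (a b : X) : IsClosed (seg a b) :=
  isClosed_sInter (fun _ hC => hC.1)

theorem left_mem_seg (a b : X) : a ∈ seg a b := by
  intro C hC; exact hC.2.2.1

theorem right_mem_seg (a b : X) : b ∈ seg a b := by
  intro C hC; exact hC.2.2.2

theorem seg_comm (a b : X) : seg a b = seg b a := by
  have : {C : Set X | IsClosed C ∧ IsPreconnected C ∧ a ∈ C ∧ b ∈ C}
      = {C : Set X | IsClosed C ∧ IsPreconnected C ∧ b ∈ C ∧ a ∈ C} := by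
    ext C
    simp only [Set.mem_setOf_eq]
    tauto
  unfold seg
  rw [this]

theorem sep_mem_seg {w a b : X} (h : Separates w a b) : w ∈ seg a b := by
  intro C hC
  exact sep_mem_of_preconn h hC.2.1 hC.2.2.1 hC.2.2.2

theorem seg_self [T2Space X] (a : X) : seg a a = {a} := by
  apply Set.Subset.antisymm
  · exact seg_subset isClosed_singleton isPreconnected_singleton rfl rfl
  · intro x hx
    rcases hx with rfl
    exact left_mem_seg _ _

end S18

namespace S18

set_option linter.unusedSectionVars false
set_option maxHeartbeats 1000000

variable {X : Type*} [TopologicalSpace X] [CompactSpace X] [T2Space X] [ConnectedSpace X]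

/-- **Bridge lemma, singleton version.** Given a closed preconnected set `D` containing `a` and a
point `z ∉ D`, there is a wall separating `z` from `a` whose wall point avoids `D` (and whose
`a`-side contains `D`). -/
theorem exists_wall_avoiding
    (hsep : ∀ u v : X, u ≠ v → ∃ w, Separates w u v)
    {D : Set X} (hDc : IsClosed D) (hDp : IsPreconnected D) {a z : X}
    (ha : a ∈ D) (hz : z ∉ D) :
    ∃ w U V, Wall w U V ∧ z ∈ U ∧ a ∈ V ∧ w ∉ D ∧ D ⊆ V := by
  have hza : z ≠ a := fun h => hz (h ▸ ha)
  suffices hcore : ∃ w U V, Wall w U V ∧ z ∈ U ∧ a ∈ V ∧ w ∉ D by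
    obtain ⟨w, U, V, hW, h1, h2, h3⟩ := hcore
    refine ⟨w, U, V, hW, h1, h2, h3, ?_⟩
    exact hW.preconn_subset_right hDp h3 ⟨a, ha, h2⟩
  by_contra hcon
  push_neg at hcon
  -- hcon : ∀ w U V, Wall w U V → z ∈ U → a ∈ V → w ∈ D
  set S : Set X := {w : X | ∃ U V, Wall w U V ∧ z ∈ U ∧ a ∈ V} with hS
  have hSD : S ⊆ D := by
    rintro w ⟨U, V, hW, h1, h2⟩
    exact hcon w U V hW h1 h2
  have hch : ∀ w : X, w ∈ S → ∃ U V, Wall w U V ∧ z ∈ U ∧ a ∈ V := fun w hw => hw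
  choose Uw Vw hWw hzw haw using hch
  have hSne : S.Nonempty := by
    obtain ⟨w, hsep'⟩ := hsep z a hza
    rw [separates_iff] at hsep'
    obtain ⟨U, V, hW, h1, h2⟩ := hsep'
    exact ⟨w, U, V, hW, h1, h2⟩
  have hwz : ∀ w (hw : w ∈ S), w ≠ z := fun w hw => ((hWw w hw).ne_of_mem_left (hzw w hw)).symm
  have hwa : ∀ w (hw : w ∈ S), w ≠ a := fun w hw => ((hWw w hw).ne_of_mem_right (haw w hw)).symm
  have hsepS : ∀ w (hw : w ∈ S), Separates w z a := fun w hw => by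
    rw [separates_iff]; exact ⟨Uw w hw, Vw w hw, hWw w hw, hzw w hw, haw w hw⟩
  -- extension: below every wall there is another wall
  have hext : ∀ w (hw : w ∈ S), ∃ θ, θ ∈ S ∧ θ ∈ comp z w := by
    intro w hw
    obtain ⟨θ, hsepθ⟩ := hsep z w (hwz w hw).symm
    rw [separates_iff] at hsepθ
    obtain ⟨Sg1, Sg2, hWθ, hzSg, hwSg⟩ := hsepθ
    have hside : IsPreconnected (Sg1 ∪ {θ}) := hWθ.preconn_left
    have hwnot : w ∉ Sg1 ∪ {θ} := by
      rintro (h1 | h1)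
      · exact hWθ.2.2.1.ne_of_mem h1 hwSg rfl
      · exact hWθ.ne_of_mem_right hwSg h1
    have haside : a ∈ Sg2 := by
      rcases hWθ.cover a with h1 | h1 | h1
      · exfalso
        apply hwnot
        exact sep_mem_of_preconn (hsepS w hw) hside (Or.inl hzSg) (by right; exact h1.symm ▸ rfl)
      · exfalso
        apply hwnot
        exact sep_mem_of_preconn (hsepS w hw) hside (Or.inl hzSg) (Or.inl h1)
      · exact h1
    have hθS : θ ∈ S := ⟨Sg1, Sg2, hWθ, hzSg, haside⟩
    refine ⟨θ, hθS, ?_⟩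
    have : Sg1 ∪ {θ} ⊆ comp z w :=
      preconn_subset_comp hside (Or.inl hzSg) hwnot
    exact this (Or.inr rfl)
  -- components of z and a at a wall are disjoint
  have hdisj : ∀ w (hw : w ∈ S), Disjoint (comp z w) (comp a w) := by
    intro w hw
    exact Set.disjoint_of_subset (comp_subset_left (hWw w hw) (hzw w hw))
      (comp_subset_right (hWw w hw) (haw w hw)) (hWw w hw).2.2.1
  -- trichotomy
  have htri : ∀ w (hw : w ∈ S), ∀ w' (hw' : w' ∈ S), w ≠ w' →
      w' ∈ comp z w ∨ w' ∈ comp a w := by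
    intro w hw w' hw' hne
    rcases (hWw w' hw').cover w with h1 | h1 | h1
    · exact absurd h1 hne
    · -- w ∈ U w' : then V w' ∪ {w'} avoids w, contains a and w'
      right
      have hpre := (hWw w' hw').preconn_right
      have hnot : w ∉ Vw w' hw' ∪ {w'} := by
        rintro (h2 | h2)
        · exact (hWw w' hw').2.2.1.ne_of_mem h1 h2 rfl
        · exact hne h2
      have : Vw w' hw' ∪ {w'} ⊆ comp a w :=
        preconn_subset_comp hpre (Or.inl (haw w' hw')) hnot
      exact this (Or.inr rfl)
    · -- w ∈ V w'
      left
      have hpre := (hWw w' hw').preconn_left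
      have hnot : w ∉ Uw w' hw' ∪ {w'} := by
        rintro (h2 | h2)
        · exact (hWw w' hw').2.2.1.ne_of_mem h2 h1 rfl
        · exact hne h2
      have : Uw w' hw' ∪ {w'} ⊆ comp z w :=
        preconn_subset_comp hpre (Or.inl (hzw w' hw')) hnot
      exact this (Or.inr rfl)
  -- antisymmetry (z-side)
  have hanti : ∀ w (hw : w ∈ S), ∀ w' (hw' : w' ∈ S),
      w' ∈ comp z w → w ∈ comp z w' → False := by
    intro w hw w' hw' h1 h2
    have hne : w ≠ w' := fun h => comp_not_mem z w (h ▸ h1)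
    have hwVnot : w ∉ Vw w' hw' ∪ {w'} := by
      rintro (h3 | h3)
      · have := comp_subset_left (hWw w' hw') (hzw w' hw') h2
        exact (hWw w' hw').2.2.1.ne_of_mem this h3 rfl
      · exact hne h3
    have : Vw w' hw' ∪ {w'} ⊆ comp a w :=
      preconn_subset_comp (hWw w' hw').preconn_right (Or.inl (haw w' hw')) hwVnot
    have hw'a : w' ∈ comp a w := this (Or.inr rfl)
    exact (hdisj w hw).ne_of_mem h1 hw'a rfl
  -- antisymmetry (a-side)
  have hantiA : ∀ w (hw : w ∈ S), ∀ w' (hw' : w' ∈ S),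
      w' ∈ comp a w → w ∈ comp a w' → False := by
    intro w hw w' hw' h1 h2
    have hne : w ≠ w' := fun h => comp_not_mem a w (h ▸ h1)
    have hwUnot : w ∉ Uw w' hw' ∪ {w'} := by
      rintro (h3 | h3)
      · have := comp_subset_right (hWw w' hw') (haw w' hw') h2
        exact (hWw w' hw').2.2.1.ne_of_mem h3 this rfl
      · exact hne h3
    have : Uw w' hw' ∪ {w'} ⊆ comp z w :=
      preconn_subset_comp (hWw w' hw').preconn_left (Or.inl (hzw w' hw')) hwUnot
    have hw'z : w' ∈ comp z w := this (Or.inr rfl)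
    exact (hdisj w hw).ne_of_mem hw'z h1 rfl
  -- nestedness
  have hnest : ∀ w (hw : w ∈ S), ∀ w' (hw' : w' ∈ S), w' ∈ comp z w →
      comp z w' ⊆ comp z w := by
    intro w hw w' hw' h1
    have hne : w' ≠ w := fun h => comp_not_mem z w (h ▸ h1)
    have hwnot : w ∉ comp z w' := fun h2 => hanti w hw w' hw' h1 h2
    exact preconn_subset_comp (comp_preconn z w') (mem_comp_self (hwz w' hw').symm) hwnot
  -- the directed family
  set T : S → Set X := fun w => closure (comp z w.1) ∩ closure S with hT
  have hTne : ∀ w : S, (T w).Nonempty := by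
    rintro ⟨w, hw⟩
    obtain ⟨θ, hθS, hθc⟩ := hext w hw
    exact ⟨θ, subset_closure hθc, subset_closure hθS⟩
  have hTc : ∀ w : S, IsClosed (T w) := fun w => isClosed_closure.inter isClosed_closure
  have hTdir : Directed (· ⊇ ·) T := by
    rintro ⟨w, hw⟩ ⟨w', hw'⟩
    by_cases hne : w = w'
    · subst hne; exact ⟨⟨w, hw⟩, subset_rfl, subset_rfl⟩
    rcases htri w hw w' hw' hne with h1 | h1
    · refine ⟨⟨w', hw'⟩, ?_, subset_rfl⟩
      exact Set.inter_subset_inter_left _ (closure_mono (hnest w hw w' hw' h1))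
    · have h2 : w ∈ comp z w' := by
        rcases htri w' hw' w hw (fun h => hne h.symm) with h2 | h2
        · exact h2
        · exact absurd h2 (fun h3 => hantiA w hw w' hw' h1 h3)
      refine ⟨⟨w, hw⟩, subset_rfl, ?_⟩
      exact Set.inter_subset_inter_left _ (closure_mono (hnest w' hw' w hw h2))
  have : Nonempty S := ⟨⟨hSne.choose, hSne.choose_spec⟩⟩
  obtain ⟨ζ, hζ⟩ := IsCompact.nonempty_iInter_of_directed_nonempty_isCompact_isClosed
    T hTdir hTne (fun w => (hTc w).isCompact) hTc
  simp only [Set.mem_iInter] at hζ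
  have hζD : ζ ∈ D := by
    have : ζ ∈ closure S := (hζ ⟨hSne.choose, hSne.choose_spec⟩).2
    exact hDc.closure_subset_iff.mpr hSD this
  have hζcomp' : ∀ w (hw : w ∈ S), ζ ∈ comp z w ∪ {w} := by
    intro w hw
    exact closure_comp_subset z w (hζ ⟨w, hw⟩).1
  have hζS : ζ ∉ S := by
    intro hζS
    obtain ⟨θ, hθS, hθc⟩ := hext ζ hζS
    have hθζ : θ ≠ ζ := fun h => comp_not_mem z ζ (h ▸ hθc)
    rcases hζcomp' θ hθS with h1 | h1
    · exact hanti ζ hζS θ hθS hθc h1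
    · exact hθζ.symm h1
  have hζcomp : ∀ w (hw : w ∈ S), ζ ∈ comp z w := by
    intro w hw
    rcases hζcomp' w hw with h1 | h1
    · exact h1
    · exact absurd (h1 ▸ hw) hζS
  have hζz : ζ ≠ z := fun h => hz (h ▸ hζD)
  obtain ⟨ω, hsepω⟩ := hsep z ζ hζz.symm
  rw [separates_iff] at hsepω
  obtain ⟨Ξ, Ξ', hWω, hzΞ, hζΞ'⟩ := hsepω
  have hexcl1 : ∀ w (hw : w ∈ S), ω ∉ comp a w := by
    intro w hw hωa
    have hE : IsPreconnected (closure (comp z w)) := (comp_preconn z w).closure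
    have hzE : z ∈ closure (comp z w) := subset_closure (mem_comp_self (hwz w hw).symm)
    have hζE : ζ ∈ closure (comp z w) := (hζ ⟨w, hw⟩).1
    have hωE : ω ∉ closure (comp z w) := by
      intro h1
      rcases closure_comp_subset z w h1 with h2 | h2
      · exact (hdisj w hw).ne_of_mem h2 hωa rfl
      · rw [h2] at hωa; exact comp_not_mem a w hωa
    exact hωE (hWω.mem_of_cross hE ⟨z, hzE, hzΞ⟩ ⟨ζ, hζE, hζΞ'⟩)
  have hexcl2 : ∀ w (hw : w ∈ S), ω ≠ w := by
    intro w hw h1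
    subst h1
    have := hWω.mem_of_cross (comp_preconn z ω)
      ⟨z, mem_comp_self (hwz ω hw).symm, hzΞ⟩ ⟨ζ, hζcomp ω hw, hζΞ'⟩
    exact comp_not_mem z ω this
  -- find a wall of S inside Ξ'
  have hw' : ∃ wt, wt ∈ S ∧ wt ∈ Ξ' := by
    have hζcl : ζ ∈ closure S := (hζ ⟨hSne.choose, hSne.choose_spec⟩).2
    rcases mem_closure_iff.mp hζcl Ξ' hWω.2.1 hζΞ' with ⟨wt, h1, h2⟩
    exact ⟨wt, h2, h1⟩
  obtain ⟨wt, hwtS, hwtΞ'⟩ := hw'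
  -- ω is on the U-side of wt's wall
  have hωU : ω ∈ Uw wt hwtS := by
    rcases (hWw wt hwtS).cover ω with h1 | h1 | h1
    · exact absurd h1 (hexcl2 wt hwtS)
    · exact h1
    · exfalso
      -- U wt ∪ {wt} contains z and ζ and avoids ω
      have hpre := (hWw wt hwtS).preconn_left
      have hz1 : z ∈ Uw wt hwtS ∪ {wt} := Or.inl (hzw wt hwtS)
      have hζ1 : ζ ∈ Uw wt hwtS ∪ {wt} := by
        left
        exact comp_subset_left (hWw wt hwtS) (hzw wt hwtS) (hζcomp wt hwtS)
      have hωnot : ω ∉ Uw wt hwtS ∪ {wt} := by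
        rintro (h2 | h2)
        · exact (hWw wt hwtS).2.2.1.ne_of_mem h2 h1 rfl
        · exact hexcl2 wt hwtS h2
      exact hωnot (hWω.mem_of_cross hpre ⟨z, hz1, hzΞ⟩ ⟨ζ, hζ1, hζΞ'⟩)
  -- a is on the Ξ'-side of ω
  have haΞ' : a ∈ Ξ' := by
    have hpre := (hWw wt hwtS).preconn_right
    have hωnot : ω ∉ Vw wt hwtS ∪ {wt} := by
      rintro (h2 | h2)
      · exact (hWw wt hwtS).2.2.1.ne_of_mem hωU h2 rfl
      · exact hexcl2 wt hwtS h2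
    have hsub : Vw wt hwtS ∪ {wt} ⊆ Ξ' := by
      apply hWω.preconn_subset_right hpre hωnot
      exact ⟨wt, Or.inr rfl, hwtΞ'⟩
    exact hsub (Or.inl (haw wt hwtS))
  have hωS : ω ∈ S := ⟨Ξ, Ξ', hWω, hzΞ, haΞ'⟩
  exact hexcl2 ω hωS rfl

end S18

namespace S18

set_option linter.unusedSectionVars false
set_option maxHeartbeats 1000000

variable {X : Type*} [TopologicalSpace X] [CompactSpace X] [T2Space X] [ConnectedSpace X]

/-- The intersection of a nonempty chain of closed preconnected sets containing `a` and `b`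
is preconnected. -/
theorem preconn_sInter_chain {c : Set (Set X)} (hchain : IsChain (· ⊆ ·) c)
    (hne : c.Nonempty) (hcl : ∀ C ∈ c, IsClosed C) (hpc : ∀ C ∈ c, IsPreconnected C)
    {a b : X} (haI : ∀ C ∈ c, a ∈ C) (hbI : ∀ C ∈ c, b ∈ C) :
    IsPreconnected (⋂₀ c) := by
  have hAc : IsClosed (⋂₀ c) := isClosed_sInter hcl
  rw [isPreconnected_iff_subset_of_fully_disjoint_closed hAc]
  intro u v hu hv hcov hdisj
  obtain ⟨Ou, Ov, hOu, hOv, huOu, hvOv, hOdisj⟩ := NormalSpace.normal u v hu hv hdisj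
  -- some member of the chain is inside Ou ∪ Ov
  have hkey : ∃ C ∈ c, C ⊆ Ou ∪ Ov := by
    by_contra hcontra
    push_neg at hcontra
    have : Nonempty c := hne.to_subtype
    have hfam := IsCompact.nonempty_iInter_of_directed_nonempty_isCompact_isClosed
      (fun C : c => C.1 \ (Ou ∪ Ov)) ?_ ?_ ?_ ?_
    · obtain ⟨x, hx⟩ := hfam
      simp only [Set.mem_iInter, Set.mem_diff] at hx
      have hxA : x ∈ ⋂₀ c := by
        intro C hC; exact (hx ⟨C, hC⟩).1
      have : x ∈ Ou ∪ Ov := by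
        rcases hcov hxA with h1 | h1
        · exact Or.inl (huOu h1)
        · exact Or.inr (hvOv h1)
      exact (hx ⟨hne.choose, hne.choose_spec⟩).2 this
    · rintro ⟨C₁, hC₁⟩ ⟨C₂, hC₂⟩
      rcases hchain.total hC₁ hC₂ with h | h
      · exact ⟨⟨C₁, hC₁⟩, subset_rfl, Set.diff_subset_diff_left h⟩
      · exact ⟨⟨C₂, hC₂⟩, Set.diff_subset_diff_left h, subset_rfl⟩
    · rintro ⟨C, hC⟩
      rcases Set.not_subset.mp (hcontra C hC) with ⟨x, hx1, hx2⟩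
      exact ⟨x, hx1, hx2⟩
    · rintro ⟨C, hC⟩
      exact ((hcl C hC).sdiff (hOu.union hOv)).isCompact
    · rintro ⟨C, hC⟩
      exact (hcl C hC).sdiff (hOu.union hOv)
  obtain ⟨C₀, hC₀c, hC₀sub⟩ := hkey
  have hC₀p := hpc C₀ hC₀c
  have hsingle : C₀ ⊆ Ou ∨ C₀ ⊆ Ov := by
    by_contra hcontra
    push_neg at hcontra
    obtain ⟨h1, h2⟩ := hcontra
    rcases Set.not_subset.mp h1 with ⟨x, hx1, hx2⟩
    rcases Set.not_subset.mp h2 with ⟨y, hy1, hy2⟩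
    have hx3 : x ∈ Ov := by
      rcases hC₀sub hx1 with h | h
      · exact absurd h hx2
      · exact h
    have hy3 : y ∈ Ou := by
      rcases hC₀sub hy1 with h | h
      · exact h
      · exact absurd h hy2
    obtain ⟨p, _, hp1, hp2⟩ := hC₀p Ou Ov hOu hOv hC₀sub ⟨y, hy1, hy3⟩ ⟨x, hx1, hx3⟩
    exact hOdisj.ne_of_mem hp1 hp2 rfl
  have hAsub : ⋂₀ c ⊆ C₀ := Set.sInter_subset_of_mem hC₀c
  rcases hsingle with h | h
  · left
    intro x hx
    rcases hcov hx with h1 | h1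
    · exact h1
    · exfalso
      exact hOdisj.ne_of_mem (h (hAsub hx)) (hvOv h1) rfl
  · right
    intro x hx
    rcases hcov hx with h1 | h1
    · exfalso
      exact hOdisj.ne_of_mem (huOu h1) (h (hAsub hx)) rfl
    · exact h1

/-- `seg a b` is preconnected: it is the minimum closed preconnected set containing `a, b`. -/
theorem isPreconnected_seg (hsep : ∀ u v : X, u ≠ v → ∃ w, Separates w u v) (a b : X) :
    IsPreconnected (seg a b) := by
  set F : Set (Set X) := {C : Set X | IsClosed C ∧ IsPreconnected C ∧ a ∈ C ∧ b ∈ C} with hF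
  have hzorn : ∃ m, m ⊆ Set.univ ∧ Minimal (· ∈ F) m := by
    apply zorn_superset_nonempty
    · intro c hcF hchain hcne
      refine ⟨⋂₀ c, ⟨isClosed_sInter (fun C hC => (hcF hC).1), ?_, ?_, ?_⟩, ?_⟩
      · exact preconn_sInter_chain hchain hcne (fun C hC => (hcF hC).1)
          (fun C hC => (hcF hC).2.1) (fun C hC => (hcF hC).2.2.1) (fun C hC => (hcF hC).2.2.2)
      · intro C hC; exact (hcF hC).2.2.1
      · intro C hC; exact (hcF hC).2.2.2
      · intro s hs; exact Set.sInter_subset_of_mem hs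
    · exact ⟨isClosed_univ, isPreconnected_univ, trivial, trivial⟩
  obtain ⟨m, -, hmin⟩ := hzorn
  have hmF := hmin.1
  -- m = seg a b
  have hseg_m : seg a b ⊆ m := seg_subset hmF.1 hmF.2.1 hmF.2.2.1 hmF.2.2.2
  have hm_seg : m ⊆ seg a b := by
    intro x hxm
    by_contra hxseg
    -- some closed preconnected C₀ containing a, b misses x
    have : ∃ C₀ : Set X, IsClosed C₀ ∧ IsPreconnected C₀ ∧ a ∈ C₀ ∧ b ∈ C₀ ∧ x ∉ C₀ := by
      by_contra hc
      push_neg at hc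
      exact hxseg (fun C hC => hc C hC.1 hC.2.1 hC.2.2.1 hC.2.2.2)
    obtain ⟨C₀, h1, h2, h3, h4, h5⟩ := this
    obtain ⟨θ, U, V, hW, hxU, haV, hθC₀, hC₀V⟩ := exists_wall_avoiding hsep h1 h2 h3 h5
    have hθm : θ ∈ m := hW.mem_of_cross hmF.2.1 ⟨x, hxm, hxU⟩ ⟨a, hmF.2.2.1, haV⟩
    have hm' : m ∩ (V ∪ {θ}) ∈ F := by
      refine ⟨hmF.1.inter hW.isClosed_right, ?_, ⟨hmF.2.2.1, Or.inl haV⟩,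
        ⟨hmF.2.2.2, Or.inl (hC₀V h4)⟩⟩
      exact hW.side_cut hmF.1 hmF.2.1 hθm
    have := hmin.2 hm' Set.inter_subset_left
    have hxm' : x ∈ m ∩ (V ∪ {θ}) := this hxm
    rcases hxm'.2 with h6 | h6
    · exact hW.2.2.1.ne_of_mem hxU h6 rfl
    · rw [h6] at hxU; exact hW.notMem_left hxU
  have : seg a b = m := Set.Subset.antisymm hseg_m hm_seg
  rw [this]
  exact hmF.2.1

theorem seg_mono (hsep : ∀ u v : X, u ≠ v → ∃ w, Separates w u v) {a b c d : X}
    (hc : c ∈ seg a b) (hd : d ∈ seg a b) : seg c d ⊆ seg a b :=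
  seg_subset (isClosed_seg a b) (isPreconnected_seg hsep a b) hc hd

/-- A set closed under taking segments between its points is preconnected. -/
theorem preconn_of_segClosed (hsep : ∀ u v : X, u ≠ v → ∃ w, Separates w u v) {S : Set X}
    (hne : S.Nonempty) (hseg : ∀ x ∈ S, ∀ y ∈ S, seg x y ⊆ S) : IsPreconnected S := by
  intro O₁ O₂ hO₁ hO₂ hcov hne₁ hne₂
  obtain ⟨x, hxS, hxO⟩ := hne₁
  obtain ⟨y, hyS, hyO⟩ := hne₂
  have h1 : seg x y ⊆ O₁ ∪ O₂ := (hseg x hxS y hyS).trans hcov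
  obtain ⟨p, hp1, hp2, hp3⟩ := isPreconnected_seg hsep x y O₁ O₂ hO₁ hO₂ h1
    ⟨x, left_mem_seg x y, hxO⟩ ⟨y, right_mem_seg x y, hyO⟩
  exact ⟨p, hseg x hxS y hyS hp1, hp2, hp3⟩

end S18

namespace S18

set_option linter.unusedSectionVars false
set_option maxHeartbeats 1000000

variable {X : Type*} [TopologicalSpace X] [CompactSpace X] [T2Space X] [ConnectedSpace X]

private theorem seg_total_aux (hsep : ∀ u v : X, u ≠ v → ∃ w, Separates w u v)
    {a b z z' θ : X} {Ξ Ξ' : Set X}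
    (hz : z ∈ seg a b) (hz' : z' ∈ seg a b) (hW : Wall θ Ξ Ξ')
    (hzΞ : z ∈ Ξ) (hz'Ξ' : z' ∈ Ξ') (haΞ : a ∈ Ξ) (hbΞ' : b ∈ Ξ') :
    z ∈ seg a z' := by
  by_contra hzn
  obtain ⟨ω, Θz, ΘD, hWω, hzΘ, haΘ, hωD, hDΘ⟩ :=
    exists_wall_avoiding hsep (isClosed_seg a z') (isPreconnected_seg hsep a z')
      (left_mem_seg a z') hzn
  have hz'Θ : z' ∈ ΘD := hDΘ (right_mem_seg a z')
  rcases hWω.cover b with hb | hb | hb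
  · -- b = ω
    have hsub : seg a b ⊆ ΘD ∪ {ω} :=
      seg_subset hWω.isClosed_right hWω.preconn_right (Or.inl haΘ) (Or.inr (by simp [hb]))
    rcases hsub hz with h1 | h1
    · exact hWω.2.2.1.ne_of_mem hzΘ h1 rfl
    · exact hWω.ne_of_mem_left hzΘ h1
  · -- b ∈ Θz : impossible via the θ wall
    exfalso
    rcases hWω.cover θ with hθ | hθ | hθ
    · -- ω = θ : θ ∈ seg a z' crossing
      apply hωD
      rw [← hθ]
      exact hW.mem_of_cross (isPreconnected_seg hsep a z')
        ⟨a, left_mem_seg a z', haΞ⟩ ⟨z', right_mem_seg a z', hz'Ξ'⟩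
    · -- θ ∈ Θz : the closed side Ξ'∪{θ} contains z' ∈ ΘD and b ∈ Θz, avoids ω
      have hpre := hW.preconn_right
      have hωnot : ω ∉ Ξ' ∪ {θ} := by
        rintro (h1 | h1)
        · -- ω ∈ Ξ' : the closed side Ξ∪{θ} contains z ∈ Θz and a ∈ ΘD, avoids ω
          have h2 := hWω.mem_of_cross hW.preconn_left
            (C := Ξ ∪ {θ}) ⟨z, Or.inl hzΞ, hzΘ⟩ ⟨a, Or.inl haΞ, haΘ⟩
          rcases h2 with h2 | h2
          · exact hW.2.2.1.ne_of_mem h2 h1 rfl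
          · rw [h2] at h1; exact hW.notMem_right h1
        · have h2 : ω = θ := Set.eq_of_mem_singleton h1
          have : ω ∈ Θz := by rw [h2]; exact hθ
          exact hWω.notMem_left this
      have h2 := hWω.mem_of_cross hpre (C := Ξ' ∪ {θ})
        ⟨b, Or.inl hbΞ', hb⟩ ⟨z', Or.inl hz'Ξ', hz'Θ⟩
      exact hωnot h2
    · -- θ ∈ ΘD : same as previous with sides swapped? No: θ ∈ ΘD means ω ∈ ?
      -- Here ω vs θ: we know ω ≠ θ (else case 1). Position of ω w.r.t. θ-wall:
      rcases hW.cover ω with hω | hω | hω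
      · -- ω = θ again
        apply hωD
        rw [hω]
        exact hW.mem_of_cross (isPreconnected_seg hsep a z')
          ⟨a, left_mem_seg a z', haΞ⟩ ⟨z', right_mem_seg a z', hz'Ξ'⟩
      · -- ω ∈ Ξ : closed side Ξ'∪{θ} contains b (∈ Ξ') and z' , avoids ω; crosses ω-wall
        have h2 := hWω.mem_of_cross hW.preconn_right (C := Ξ' ∪ {θ})
          ⟨b, Or.inl hbΞ', hb⟩ ⟨z', Or.inl hz'Ξ', hz'Θ⟩
        rcases h2 with h2 | h2
        · exact hW.2.2.1.ne_of_mem hω h2 rfl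
        · rw [h2] at hω; exact hW.notMem_left hω
      · -- ω ∈ Ξ' : closed side Ξ∪{θ} contains z ∈ Θz, a ∈ ΘD, avoids ω
        have h2 := hWω.mem_of_cross hW.preconn_left (C := Ξ ∪ {θ})
          ⟨z, Or.inl hzΞ, hzΘ⟩ ⟨a, Or.inl haΞ, haΘ⟩
        rcases h2 with h2 | h2
        · exact hW.2.2.1.ne_of_mem h2 hω rfl
        · rw [h2] at hω; exact hW.notMem_right hω
  · -- b ∈ ΘD
    have hsub : seg a b ⊆ ΘD ∪ {ω} :=
      seg_subset hWω.isClosed_right hWω.preconn_right (Or.inl haΘ) (Or.inl hb)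
    rcases hsub hz with h1 | h1
    · exact hWω.2.2.1.ne_of_mem hzΘ h1 rfl
    · exact hWω.ne_of_mem_left hzΘ h1

/-- Totality of the order on a segment. -/
theorem seg_total (hsep : ∀ u v : X, u ≠ v → ∃ w, Separates w u v)
    {a b z z' : X} (hz : z ∈ seg a b) (hz' : z' ∈ seg a b) :
    z ∈ seg a z' ∨ z' ∈ seg a z := by
  by_cases hne : z = z'
  · subst hne; exact Or.inl (right_mem_seg a z)
  obtain ⟨θ, hsepθ⟩ := hsep z z' hne
  rw [separates_iff] at hsepθ
  obtain ⟨Ξ, Ξ', hW, hzΞ, hz'Ξ'⟩ := hsepθ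
  have hnb1 : ¬(a ∈ Ξ ∪ {θ} ∧ b ∈ Ξ ∪ {θ}) := by
    rintro ⟨h1, h2⟩
    have hsub : seg a b ⊆ Ξ ∪ {θ} :=
      seg_subset hW.isClosed_left hW.preconn_left h1 h2
    rcases hsub hz' with h3 | h3
    · exact hW.2.2.1.ne_of_mem h3 hz'Ξ' rfl
    · exact hW.ne_of_mem_right hz'Ξ' h3
  have hnb2 : ¬(a ∈ Ξ' ∪ {θ} ∧ b ∈ Ξ' ∪ {θ}) := by
    rintro ⟨h1, h2⟩
    have hsub : seg a b ⊆ Ξ' ∪ {θ} :=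
      seg_subset hW.isClosed_right hW.preconn_right h1 h2
    rcases hsub hz with h3 | h3
    · exact hW.2.2.1.ne_of_mem hzΞ h3 rfl
    · exact hW.ne_of_mem_left hzΞ h3
  rcases hW.cover a with ha | ha | ha
  · exfalso
    rcases hW.cover b with hb | hb | hb
    · exact hnb1 ⟨Or.inr (ha ▸ rfl), Or.inr (hb ▸ rfl)⟩
    · exact hnb1 ⟨Or.inr (ha ▸ rfl), Or.inl hb⟩
    · exact hnb2 ⟨Or.inr (ha ▸ rfl), Or.inl hb⟩
  · -- a ∈ Ξ : then b ∈ Ξ'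
    have hb : b ∈ Ξ' := by
      rcases hW.cover b with hb | hb | hb
      · exact absurd ⟨Or.inl ha, Or.inr (hb ▸ rfl)⟩ hnb1
      · exact absurd ⟨Or.inl ha, Or.inl hb⟩ hnb1
      · exact hb
    exact Or.inl (seg_total_aux hsep hz hz' hW hzΞ hz'Ξ' ha hb)
  · -- a ∈ Ξ' : then b ∈ Ξ, symmetric
    have hb : b ∈ Ξ := by
      rcases hW.cover b with hb | hb | hb
      · exact absurd ⟨Or.inl ha, Or.inr (hb ▸ rfl)⟩ hnb2
      · exact hb
      · exact absurd ⟨Or.inl ha, Or.inl hb⟩ hnb2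
    exact Or.inr (seg_total_aux hsep hz' hz hW.symm hz'Ξ' hzΞ ha hb)

/-- Antisymmetry. -/
theorem seg_antisymm (hsep : ∀ u v : X, u ≠ v → ∃ w, Separates w u v)
    {a z z' : X} (h1 : z ∈ seg a z') (h2 : z' ∈ seg a z) : z = z' := by
  by_contra hne
  obtain ⟨θ, hsepθ⟩ := hsep z z' hne
  rw [separates_iff] at hsepθ
  obtain ⟨Ξ, Ξ', hW, hzΞ, hz'Ξ'⟩ := hsepθ
  rcases hW.cover a with ha | ha | ha
  · have hsub : seg a z ⊆ Ξ ∪ {θ} :=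
      seg_subset hW.isClosed_left hW.preconn_left (Or.inr (ha ▸ rfl)) (Or.inl hzΞ)
    rcases hsub h2 with h3 | h3
    · exact hW.2.2.1.ne_of_mem h3 hz'Ξ' rfl
    · exact hW.ne_of_mem_right hz'Ξ' h3
  · have hsub : seg a z ⊆ Ξ ∪ {θ} :=
      seg_subset hW.isClosed_left hW.preconn_left (Or.inl ha) (Or.inl hzΞ)
    rcases hsub h2 with h3 | h3
    · exact hW.2.2.1.ne_of_mem h3 hz'Ξ' rfl
    · exact hW.ne_of_mem_right hz'Ξ' h3
  · have hsub : seg a z' ⊆ Ξ' ∪ {θ} :=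
      seg_subset hW.isClosed_right hW.preconn_right (Or.inl ha) (Or.inl hz'Ξ')
    rcases hsub h1 with h3 | h3
    · exact hW.2.2.1.ne_of_mem hzΞ h3 rfl
    · exact hW.ne_of_mem_left hzΞ h3

/-- Order-betweenness implies segment-betweenness. -/
theorem seg_order_between (hsep : ∀ u v : X, u ≠ v → ∃ w, Separates w u v)
    {a p q r : X} (h1 : p ∈ seg a q) (h2 : q ∈ seg a r) : q ∈ seg p r := by
  by_contra hqn
  obtain ⟨ω, Θq, ΘD, hWω, hqΘ, hpΘ, hωD, hDΘ⟩ :=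
    exists_wall_avoiding hsep (isClosed_seg p r) (isPreconnected_seg hsep p r)
      (left_mem_seg p r) hqn
  have hrΘ : r ∈ ΘD := hDΘ (right_mem_seg p r)
  rcases hWω.cover a with ha | ha | ha
  · -- a = ω
    have hsub : seg a r ⊆ ΘD ∪ {ω} :=
      seg_subset hWω.isClosed_right hWω.preconn_right (Or.inr (by simp [ha])) (Or.inl hrΘ)
    rcases hsub h2 with h3 | h3
    · exact hWω.2.2.1.ne_of_mem hqΘ h3 rfl
    · exact hWω.ne_of_mem_left hqΘ h3
  · -- a ∈ Θq
    have hsub : seg a q ⊆ Θq ∪ {ω} :=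
      seg_subset hWω.isClosed_left hWω.preconn_left (Or.inl ha) (Or.inl hqΘ)
    rcases hsub h1 with h3 | h3
    · exact hWω.2.2.1.ne_of_mem h3 hpΘ rfl
    · rw [h3] at hpΘ; exact hWω.notMem_right hpΘ
  · -- a ∈ ΘD
    have hsub : seg a r ⊆ ΘD ∪ {ω} :=
      seg_subset hWω.isClosed_right hWω.preconn_right (Or.inl ha) (Or.inl hrΘ)
    rcases hsub h2 with h3 | h3
    · exact hWω.2.2.1.ne_of_mem hqΘ h3 rfl
    · exact hWω.ne_of_mem_left hqΘ h3

/-- Any three points on a segment are "collinear": one lies in the segment of the other two. -/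
theorem seg_collinear (hsep : ∀ u v : X, u ≠ v → ∃ w, Separates w u v)
    {a b z₁ z₂ z₃ : X} (h1 : z₁ ∈ seg a b) (h2 : z₂ ∈ seg a b) (h3 : z₃ ∈ seg a b) :
    z₁ ∈ seg z₂ z₃ ∨ z₂ ∈ seg z₁ z₃ ∨ z₃ ∈ seg z₁ z₂ := by
  rcases seg_total hsep h1 h2 with t12 | t21
  · rcases seg_total hsep h2 h3 with t23 | t32
    · exact Or.inr (Or.inl (seg_order_between hsep t12 t23))
    · rcases seg_total hsep h1 h3 with t13 | t31
      · exact Or.inr (Or.inr (seg_order_between hsep t13 t32))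
      · have := seg_order_between hsep t31 t12
        rw [seg_comm] at this
        exact Or.inl this
  · rcases seg_total hsep h1 h3 with t13 | t31
    · exact Or.inl (seg_order_between hsep t21 t13)
    · rcases seg_total hsep h2 h3 with t23 | t32
      · have := seg_order_between hsep t23 t31
        rw [seg_comm] at this
        exact Or.inr (Or.inr this)
      · have := seg_order_between hsep t32 t21
        rw [seg_comm] at this
        exact Or.inr (Or.inl this)

end S18

namespace S18

set_option linter.unusedSectionVars false
set_option maxHeartbeats 1000000

variable {X : Type*} [TopologicalSpace X] [CompactSpace X] [T2Space X] [ConnectedSpace X]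

/-- **Bridge lemma, general version**: a wall separating two disjoint continua. -/
theorem exists_wall_sep (hsep : ∀ u v : X, u ≠ v → ∃ w, Separates w u v)
    {C C' : Set X} (hCc : IsClosed C) (hCp : IsPreconnected C)
    (hC'c : IsClosed C') (hC'p : IsPreconnected C') (hdisj : Disjoint C C')
    {u u' : X} (hu : u ∈ C) (hu' : u' ∈ C') :
    ∃ w U V, Wall w U V ∧ u ∈ U ∧ u' ∈ V ∧ C ⊆ U ∧ C' ⊆ V := by
  -- find a point of `seg u u'` outside `C ∪ C'`
  have hs : ∃ s, s ∈ seg u u' ∧ s ∉ C ∧ s ∉ C' := by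
    by_contra hcontra
    push_neg at hcontra
    have hcover : seg u u' ⊆ (seg u u' ∩ C) ∪ (seg u u' ∩ C') := by
      intro x hx
      by_cases hxC : x ∈ C
      · exact Or.inl ⟨hx, hxC⟩
      · exact Or.inr ⟨hx, hcontra x hx hxC⟩
    have hKdisj : Disjoint (seg u u' ∩ C) (seg u u' ∩ C') :=
      Set.disjoint_of_subset Set.inter_subset_right Set.inter_subset_right hdisj
    have := (isPreconnected_iff_subset_of_fully_disjoint_closed (isClosed_seg u u')).mp
      (isPreconnected_seg hsep u u') _ _ ((isClosed_seg u u').inter hCc)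
      ((isClosed_seg u u').inter hC'c) hcover hKdisj
    rcases this with h | h
    · have := h (right_mem_seg u u')
      exact hdisj.ne_of_mem this.2 hu' rfl
    · have := h (left_mem_seg u u')
      exact hdisj.ne_of_mem hu this.2 rfl
  obtain ⟨s, hs1, hs2, hs3⟩ := hs
  obtain ⟨θ, Sg, Up, hWθ, hsSg, huUp, hθC, hCUp⟩ :=
    exists_wall_avoiding hsep hCc hCp hu hs2
  -- u' cases
  rcases hWθ.cover u' with hu'c | hu'c | hu'c
  · exfalso
    have hsub : seg u u' ⊆ Up ∪ {θ} :=
      seg_subset hWθ.isClosed_right hWθ.preconn_right (Or.inl huUp) (Or.inr (by simp [hu'c]))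
    rcases hsub hs1 with h1 | h1
    · exact hWθ.2.2.1.ne_of_mem hsSg h1 rfl
    · exact hWθ.ne_of_mem_left hsSg h1
  · -- u' ∈ Sg : good case
    have hθC' : θ ∉ C' := by
      intro hθC'
      have h1 : θ ∈ seg u s := by
        apply sep_mem_seg
        rw [separates_iff]
        exact ⟨Up, Sg, hWθ.symm, huUp, hsSg⟩
      have h2 : s ∈ seg θ u' := seg_order_between hsep h1 hs1
      have h3 : seg θ u' ⊆ C' := seg_subset hC'c hC'p hθC' hu'
      exact hs3 (h3 h2)
    refine ⟨θ, Up, Sg, hWθ.symm, huUp, hu'c, hCUp, ?_⟩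
    exact hWθ.symm.preconn_subset_right hC'p hθC' ⟨u', hu', hu'c⟩
  · exfalso
    have hsub : seg u u' ⊆ Up ∪ {θ} :=
      seg_subset hWθ.isClosed_right hWθ.preconn_right (Or.inl huUp) (Or.inl hu'c)
    rcases hsub hs1 with h1 | h1
    · exact hWθ.2.2.1.ne_of_mem hsSg h1 rfl
    · exact hWθ.ne_of_mem_left hsSg h1

/-- Median point of three points. -/
theorem exists_median (hsep : ∀ u v : X, u ≠ v → ∃ w, Separates w u v) (a b c : X) :
    ∃ y, y ∈ seg a b ∧ y ∈ seg a c ∧ y ∈ seg b c := by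
  by_contra hcontra
  push_neg at hcontra
  set J : Set X := seg a b ∩ seg a c with hJ
  have hJc : IsClosed J := (isClosed_seg a b).inter (isClosed_seg a c)
  have hJp : IsPreconnected J := by
    have hane : J.Nonempty := ⟨a, left_mem_seg a b, left_mem_seg a c⟩
    apply preconn_of_segClosed hsep hane
    intro x hx y hy
    exact Set.subset_inter ((seg_mono hsep hx.1 hy.1)) ((seg_mono hsep hx.2 hy.2))
  have hdisj : Disjoint J (seg b c) := by
    rw [Set.disjoint_left]
    intro y hy1 hy2
    exact hcontra y hy1.1 hy1.2 hy2
  obtain ⟨θ, U, V, hW, haU, hbV, hJU, hbcV⟩ :=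
    exists_wall_sep hsep hJc hJp (isClosed_seg b c) (isPreconnected_seg hsep b c) hdisj
      (⟨left_mem_seg a b, left_mem_seg a c⟩ : a ∈ J) (left_mem_seg b c)
  have hcV : c ∈ V := hbcV (right_mem_seg b c)
  have h1 : θ ∈ seg a b := by
    apply sep_mem_seg; rw [separates_iff]; exact ⟨U, V, hW, haU, hbV⟩
  have h2 : θ ∈ seg a c := by
    apply sep_mem_seg; rw [separates_iff]; exact ⟨U, V, hW, haU, hcV⟩
  exact hW.notMem_left (hJU ⟨h1, h2⟩)

/-- Helly property for three continua. -/
theorem helly3 (hsep : ∀ u v : X, u ≠ v → ∃ w, Separates w u v)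
    {C₁ C₂ C₃ : Set X} (h1c : IsClosed C₁) (h1p : IsPreconnected C₁)
    (h2c : IsClosed C₂) (h2p : IsPreconnected C₂)
    (h3c : IsClosed C₃) (h3p : IsPreconnected C₃)
    (h12 : (C₁ ∩ C₂).Nonempty) (h13 : (C₁ ∩ C₃).Nonempty) (h23 : (C₂ ∩ C₃).Nonempty) :
    (C₁ ∩ C₂ ∩ C₃).Nonempty := by
  obtain ⟨a, ha2, ha3⟩ := h23
  obtain ⟨b, hb1, hb3⟩ := h13
  obtain ⟨c, hc1, hc2⟩ := h12
  obtain ⟨y, hy1, hy2, hy3⟩ := exists_median hsep a b c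
  refine ⟨y, ⟨?_, ?_⟩, ?_⟩
  · exact seg_subset h1c h1p hb1 hc1 hy3
  · exact seg_subset h2c h2p ha2 hc2 hy2
  · exact seg_subset h3c h3p ha3 hb3 hy1

/-- Helly property for finitely many continua. -/
theorem helly_finset (hsep : ∀ u v : X, u ≠ v → ∃ w, Separates w u v)
    {ι : Type*} [DecidableEq ι] (t : Finset ι) (C : ι → Set X) (htne : t.Nonempty)
    (hc : ∀ i ∈ t, IsClosed (C i)) (hp : ∀ i ∈ t, IsPreconnected (C i))
    (hpair : ∀ i ∈ t, ∀ j ∈ t, (C i ∩ C j).Nonempty) : (⋂ i ∈ t, C i).Nonempty := by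
  classical
  induction t using Finset.induction_on generalizing C with
  | empty => exact absurd htne (by simp)
  | @insert i₀ t hi₀ IH =>
    by_cases htne' : t.Nonempty
    · have hkey := IH (fun j => C i₀ ∩ C j) htne' ?_ ?_ ?_
      · obtain ⟨x, hx⟩ := hkey
        simp only [Set.mem_iInter] at hx
        refine ⟨x, ?_⟩
        simp only [Set.mem_iInter, Finset.mem_insert]
        rintro i (rfl | hi)
        · exact (hx htne'.choose htne'.choose_spec).1
        · exact (hx i hi).2
      · intro j hj
        exact (hc i₀ (Finset.mem_insert_self i₀ t)).inter (hc j (Finset.mem_insert_of_mem hj))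
      · intro j hj
        have hne : (C i₀ ∩ C j).Nonempty :=
          hpair i₀ (Finset.mem_insert_self i₀ t) j (Finset.mem_insert_of_mem hj)
        apply preconn_of_segClosed hsep hne
        intro x hx y hy
        refine Set.subset_inter ?_ ?_
        · exact seg_subset (hc i₀ (Finset.mem_insert_self i₀ t))
            (hp i₀ (Finset.mem_insert_self i₀ t)) hx.1 hy.1
        · exact seg_subset (hc j (Finset.mem_insert_of_mem hj))
            (hp j (Finset.mem_insert_of_mem hj)) hx.2 hy.2
      · intro i hi j hj
        have h3 := helly3 hsep (hc i₀ (Finset.mem_insert_self i₀ t))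
          (hp i₀ (Finset.mem_insert_self i₀ t))
          (hc i (Finset.mem_insert_of_mem hi)) (hp i (Finset.mem_insert_of_mem hi))
          (hc j (Finset.mem_insert_of_mem hj)) (hp j (Finset.mem_insert_of_mem hj))
          (hpair i₀ (Finset.mem_insert_self i₀ t) i (Finset.mem_insert_of_mem hi))
          (hpair i₀ (Finset.mem_insert_self i₀ t) j (Finset.mem_insert_of_mem hj))
          (hpair i (Finset.mem_insert_of_mem hi) j (Finset.mem_insert_of_mem hj))
        obtain ⟨x, hx⟩ := h3
        exact ⟨x, ⟨hx.1.1, hx.1.2⟩, hx.1.1, hx.2⟩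
    · rw [Finset.not_nonempty_iff_eq_empty] at htne'
      subst htne'
      obtain ⟨x, hx, -⟩ := hpair i₀ (Finset.mem_insert_self i₀ ∅) i₀ (Finset.mem_insert_self i₀ ∅)
      exact ⟨x, by simp [hx]⟩

/-- Helly property for an arbitrary family of continua. -/
theorem helly_family (hsep : ∀ u v : X, u ≠ v → ∃ w, Separates w u v)
    {ι : Type*} [Nonempty ι] (C : ι → Set X)
    (hc : ∀ i, IsClosed (C i)) (hp : ∀ i, IsPreconnected (C i))
    (hpair : ∀ i j, (C i ∩ C j).Nonempty) : (⋂ i, C i).Nonempty := by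
  classical
  by_contra hcontra
  rw [Set.not_nonempty_iff_eq_empty] at hcontra
  have i₀ : ι := Classical.arbitrary ι
  have hemp : C i₀ ∩ ⋂ i, C i = ∅ := by rw [hcontra]; simp
  obtain ⟨u, hu⟩ := ((hc i₀).isCompact).elim_finite_subfamily_closed C hc hemp
  have := helly_finset hsep (insert i₀ u) C ⟨i₀, Finset.mem_insert_self i₀ u⟩
    (fun i _ => hc i) (fun i _ => hp i) (fun i _ j _ => hpair i j)
  obtain ⟨x, hx⟩ := this
  simp only [Set.mem_iInter, Finset.mem_insert] at hx
  have : x ∈ C i₀ ∩ ⋂ i ∈ u, C i := by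
    refine ⟨hx i₀ (Or.inl rfl), ?_⟩
    simp only [Set.mem_iInter]
    intro i hi
    exact hx i (Or.inr hi)
  rw [hu] at this
  exact this

end S18

namespace S18

set_option linter.unusedSectionVars false
set_option maxHeartbeats 1000000

variable {X : Type*} [TopologicalSpace X] [CompactSpace X] [T2Space X] [ConnectedSpace X]

/-- The extreme points of a set `Z`: those not strictly between two points of `Z`. -/
def Ext (Z : Set X) : Set X :=
  {z | z ∈ Z ∧ ∀ r ∈ Z, ∀ r' ∈ Z, z ∈ seg r r' → z = r ∨ z = r'}

theorem ext_subset (Z : Set X) : Ext Z ⊆ Z := fun _ h => h.1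

/-- Every nonempty closed set has an extreme point. -/
theorem ext_nonempty (hsep : ∀ u v : X, u ≠ v → ∃ w, Separates w u v)
    {Z : Set X} (hZc : IsClosed Z) (hZne : Z.Nonempty) : (Ext Z).Nonempty := by
  classical
  obtain ⟨z₀, hz₀⟩ := hZne
  set r : Z → Z → Prop := fun x y => (x : X) ∈ seg z₀ (y : X) with hr
  have hrefl : ∀ x : Z, r x x := fun x => right_mem_seg z₀ x
  have htrans : ∀ {x y z : Z}, r x y → r y z → r x z := by
    intro x y z h1 h2
    exact seg_mono hsep (left_mem_seg z₀ (z : X)) h2 h1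
  have hchains : ∀ c : Set Z, IsChain r c → ∃ ub, ∀ a ∈ c, r a ub := by
    intro c hchain
    by_cases hcne : c.Nonempty
    · -- compactness argument
      set T : c → Set X := fun a =>
        closure ((fun b : Z => (b : X)) '' {b ∈ c | r a.1 b}) with hT
      have : Nonempty c := hcne.to_subtype
      have hTne : ∀ a : c, (T a).Nonempty :=
        fun a => ⟨a.1, subset_closure ⟨a.1, ⟨a.2, hrefl a.1⟩, rfl⟩⟩
      have hTc : ∀ a : c, IsClosed (T a) := fun a => isClosed_closure
      have hTdir : Directed (· ⊇ ·) T := by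
        rintro a a'
        by_cases hae : a.1 = a'.1
        · exact ⟨a, subset_rfl, by rw [hT]; simp only [hae]; exact subset_rfl⟩
        rcases hchain a.2 a'.2 (fun h => hae (by exact_mod_cast h)) with h | h
        · refine ⟨a', ?_, subset_rfl⟩
          apply closure_mono
          apply Set.image_mono
          rintro b ⟨hb1, hb2⟩
          exact ⟨hb1, htrans h hb2⟩
        · refine ⟨a, subset_rfl, ?_⟩
          apply closure_mono
          apply Set.image_mono
          rintro b ⟨hb1, hb2⟩
          exact ⟨hb1, htrans h hb2⟩
      obtain ⟨ζ, hζ⟩ := IsCompact.nonempty_iInter_of_directed_nonempty_isCompact_isClosed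
        T hTdir hTne (fun a => (hTc a).isCompact) hTc
      simp only [Set.mem_iInter] at hζ
      have hζZ : ζ ∈ Z := by
        have h1 := hζ ⟨hcne.choose, hcne.choose_spec⟩
        refine hZc.closure_subset_iff.mpr ?_ h1
        rintro x ⟨b, -, rfl⟩
        exact b.2
      refine ⟨⟨ζ, hζZ⟩, ?_⟩
      intro a hac
      show (a : X) ∈ seg z₀ ζ
      by_contra han
      obtain ⟨ω, Θa, ΘD, hWω, haΘ, hz₀Θ, hωD, hDΘ⟩ :=
        exists_wall_avoiding hsep (isClosed_seg z₀ ζ) (isPreconnected_seg hsep z₀ ζ)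
          (left_mem_seg z₀ ζ) han
      have hζΘ : ζ ∈ ΘD := hDΘ (right_mem_seg z₀ ζ)
      have h1 := hζ ⟨a, hac⟩
      rcases mem_closure_iff.mp h1 ΘD hWω.2.1 hζΘ with ⟨x, hx1, hx2⟩
      obtain ⟨b, ⟨hbc, hrab⟩, rfl⟩ := hx2
      have hsub : seg z₀ (b : X) ⊆ ΘD ∪ {ω} :=
        seg_subset hWω.isClosed_right hWω.preconn_right (Or.inl hz₀Θ) (Or.inl hx1)
      rcases hsub hrab with h2 | h2
      · exact hWω.2.2.1.ne_of_mem haΘ h2 rfl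
      · exact hWω.ne_of_mem_left haΘ h2
    · rw [Set.not_nonempty_iff_eq_empty] at hcne
      subst hcne
      exact ⟨⟨z₀, hz₀⟩, by simp⟩
  obtain ⟨m, hm⟩ := exists_maximal_of_chains_bounded hchains (fun h1 h2 => htrans h1 h2)
  refine ⟨m, m.2, ?_⟩
  intro p hp p' hp' hmem
  by_contra hcontra
  push_neg at hcontra
  obtain ⟨hmp, hmp'⟩ := hcontra
  obtain ⟨y, hy1, hy2, hy3⟩ := exists_median hsep z₀ p p'
  have hcover : seg p p' ⊆ seg p y ∪ seg y p' := by
    apply seg_subset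
    · exact (isClosed_seg p y).union (isClosed_seg y p')
    · apply IsPreconnected.union y (right_mem_seg p y) (left_mem_seg y p')
        (isPreconnected_seg hsep p y) (isPreconnected_seg hsep y p')
    · exact Or.inl (left_mem_seg p y)
    · exact Or.inr (right_mem_seg y p')
  rcases hcover hmem with hcase | hcase
  · -- m ∈ seg p y ⊆ seg z₀ p
    have h1 : (m : X) ∈ seg z₀ p := seg_mono hsep (right_mem_seg z₀ p) hy1 hcase
    have h2 := hm ⟨p, hp⟩ h1
    exact hmp (seg_antisymm hsep h1 h2)
  · have h1 : (m : X) ∈ seg z₀ p' := seg_mono hsep hy2 (right_mem_seg z₀ p') hcase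
    have h2 := hm ⟨p', hp'⟩ h1
    exact hmp' (seg_antisymm hsep h1 h2)

/-- No three distinct extreme points of `Z` lie on a common segment. -/
theorem ext_no_three (hsep : ∀ u v : X, u ≠ v → ∃ w, Separates w u v)
    {Z : Set X} {a b z₁ z₂ z₃ : X}
    (h1 : z₁ ∈ Ext Z) (h2 : z₂ ∈ Ext Z) (h3 : z₃ ∈ Ext Z)
    (hm1 : z₁ ∈ seg a b) (hm2 : z₂ ∈ seg a b) (hm3 : z₃ ∈ seg a b)
    (h12 : z₁ ≠ z₂) (h13 : z₁ ≠ z₃) (h23 : z₂ ≠ z₃) : False := by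
  rcases seg_collinear hsep hm1 hm2 hm3 with h | h | h
  · rcases h1.2 z₂ h2.1 z₃ h3.1 h with h' | h'
    · exact h12 h'
    · exact h13 h'
  · rcases h2.2 z₁ h1.1 z₃ h3.1 h with h' | h'
    · exact h12 h'.symm
    · exact h23 h'
  · rcases h3.2 z₁ h1.1 z₂ h2.1 h with h' | h'
    · exact h13 h'.symm
    · exact h23 h'.symm

theorem finite_of_no_three {S : Set X}
    (h : ∀ x ∈ S, ∀ y ∈ S, ∀ z ∈ S, x ≠ y → x ≠ z → y ≠ z → False) : S.Finite := by
  by_contra hinf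
  rw [← Set.not_infinite, not_not] at hinf
  obtain ⟨x, hx⟩ := hinf.nonempty
  have h2 : (S \ {x}).Infinite := hinf.diff (Set.finite_singleton x)
  obtain ⟨y, hy⟩ := h2.nonempty
  have h3 : ((S \ {x}) \ {y}).Infinite := h2.diff (Set.finite_singleton y)
  obtain ⟨z, hz⟩ := h3.nonempty
  have hxy : x ≠ y := fun he => hy.2 (by simp [he])
  have hxz : x ≠ z := fun he => hz.1.2 (by simp [he])
  have hyz : y ≠ z := fun he => hz.2 (by simp [he])
  exact h x hx y hy.1 z hz.1.1 hxy hxz hyz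

end S18

namespace S18

set_option linter.unusedSectionVars false
set_option maxHeartbeats 1000000

variable {X : Type*} [TopologicalSpace X]

section Equivariance

variable {G : Type*} [Group G] [MulAction G X] [ContinuousConstSMul G X]

theorem smul_preimage_eq_image (g : G) (C : Set X) :
    (fun z : X => g • z) ⁻¹' C = (fun z : X => g⁻¹ • z) '' C := by
  ext t
  simp only [Set.mem_preimage, Set.mem_image]
  constructor
  · intro h; exact ⟨g • t, h, by simp⟩
  · rintro ⟨s, hs, rfl⟩; simpa using hs

theorem seg_smul_subset (g : G) (a b : X) :
    (fun z : X => g • z) '' seg a b ⊆ seg (g • a) (g • b) := by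
  rintro p ⟨q, hq, rfl⟩
  intro C hC
  have h1 : seg a b ⊆ (fun z : X => g • z) ⁻¹' C := by
    apply seg_subset
    · exact IsClosed.preimage (continuous_const_smul g) hC.1
    · rw [smul_preimage_eq_image]
      exact hC.2.1.image _ (continuous_const_smul (g⁻¹ : G)).continuousOn
    · show g • a ∈ C; exact hC.2.2.1
    · show g • b ∈ C; exact hC.2.2.2
  exact h1 hq

theorem image_smul_comp (h g : G) (s : Set X) :
    (fun z : X => h • z) '' ((fun z : X => g • z) '' s) = (fun z : X => (h * g) • z) '' s := by
  rw [Set.image_image]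
  simp only [← mul_smul]

theorem seg_smul (g : G) (a b : X) :
    (fun z : X => g • z) '' seg a b = seg (g • a) (g • b) := by
  apply Set.Subset.antisymm (seg_smul_subset g a b)
  have h1 := seg_smul_subset (g⁻¹ : G) (g • a) (g • b)
  have h2 : (fun z : X => g • z) '' ((fun z : X => (g⁻¹ : G) • z) '' seg (g • a) (g • b)) ⊆
      (fun z : X => g • z) '' (seg ((g⁻¹ : G) • g • a) ((g⁻¹ : G) • g • b)) :=
    Set.image_mono h1
  rw [image_smul_comp] at h2
  simp only [mul_inv_cancel, one_smul, inv_smul_smul] at h2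
  rw [Set.image_id'] at h2
  exact h2
end Equivariance

end S18

open S18 in
/-- If a group `G` acts on a nonempty dendrite `X` with all orbits infinite,
then the action is proximal: for every `x, y` the closure of `{(g•x, g•y) : g ∈ G}` meets the
diagonal. -/
theorem stmt_18 {G X : Type*} [Group G]
    [TopologicalSpace X] [CompactSpace X] [T2Space X] [ConnectedSpace X]
    [TopologicalSpace.MetrizableSpace X] [Nonempty X]
    [MulAction G X] [ContinuousConstSMul G X]
    (hsep : ∀ u v : X, u ≠ v → ∃ w, Separates w u v)
    (horb : ∀ x : X, (MulAction.orbit G x).Infinite)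
    (x y : X) :
    ∃ z : X, (z, z) ∈ closure {p : X × X | ∃ g : G, p = (g • x, g • y)} := by
  classical
  by_contra hcon
  push_neg at hcon
  set S₀ : Set (X × X) := {p : X × X | ∃ g : G, p = (g • x, g • y)} with hS₀
  set A : Set (X × X) := closure S₀ with hA
  have hAc : IsClosed A := isClosed_closure
  have hAcompact : IsCompact A := hAc.isCompact
  have hAne : A.Nonempty := ⟨(x, y), subset_closure ⟨1, by simp⟩⟩
  have hAdiag : ∀ p ∈ A, p.1 ≠ p.2 := by
    rintro ⟨u, v⟩ hp he
    simp only at he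
    subst he
    exact hcon u hp
  -- invariance of A
  have hmapA : ∀ g : G, ∀ p ∈ A, ((g • p.1, g • p.2) : X × X) ∈ A := by
    intro g p hp
    have hcont : Continuous (fun q : X × X => ((g • q.1, g • q.2) : X × X)) :=
      ((continuous_const_smul g).comp continuous_fst).prodMk
        ((continuous_const_smul g).comp continuous_snd)
    have him : (fun q : X × X => ((g • q.1, g • q.2) : X × X)) '' S₀ ⊆ S₀ := by
      rintro q ⟨q', ⟨g', rfl⟩, rfl⟩
      exact ⟨g * g', by simp [mul_smul]⟩
    have h1 : (fun q : X × X => ((g • q.1, g • q.2) : X × X)) '' A ⊆ A := by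
      calc (fun q : X × X => ((g • q.1, g • q.2) : X × X)) '' A
          ⊆ closure ((fun q : X × X => ((g • q.1, g • q.2) : X × X)) '' S₀) :=
            image_closure_subset_closure_image hcont
        _ ⊆ closure S₀ := closure_mono him
    exact h1 ⟨p, hp, rfl⟩
  -- wall cover of A
  have hwalls : ∀ p : A, ∃ w U V, Wall w U V ∧ (p : X × X).1 ∈ U ∧ (p : X × X).2 ∈ V := by
    rintro ⟨p, hp⟩
    obtain ⟨w, hw⟩ := hsep p.1 p.2 (hAdiag p hp)
    rw [separates_iff] at hw
    obtain ⟨U, V, h1, h2, h3⟩ := hw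
    exact ⟨w, U, V, h1, h2, h3⟩
  choose wp Up Vp hWp hUp hVp using hwalls
  have hcover : A ⊆ ⋃ p : A, (Up p) ×ˢ (Vp p) := by
    intro q hq
    exact Set.mem_iUnion.mpr ⟨⟨q, hq⟩, hUp ⟨q, hq⟩, hVp ⟨q, hq⟩⟩
  obtain ⟨t, ht⟩ := hAcompact.elim_finite_subcover (fun p : A => (Up p) ×ˢ (Vp p))
    (fun p => (hWp p).1.prod (hWp p).2.1) hcover
  -- every pair in A has a wall from t in its segment
  have hwall_seg : ∀ m ∈ A, ∃ p ∈ t, wp p ∈ seg m.1 m.2 := by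
    intro m hm
    have := ht hm
    simp only [Set.mem_iUnion] at this
    obtain ⟨p, hpt, hmem⟩ := this
    refine ⟨p, hpt, ?_⟩
    apply sep_mem_seg
    rw [separates_iff]
    exact ⟨Up p, Vp p, hWp p, hmem.1, hmem.2⟩
  -- disjoint families of segments of pairs of A
  set good : Finset (X × X) → Prop := fun F =>
    (∀ m ∈ F, m ∈ A) ∧ (∀ m ∈ F, ∀ m' ∈ F, m ≠ m' →
      Disjoint (seg m.1 m.2) (seg m'.1 m'.2)) with hgood
  have hws : ∀ m : X × X, ∃ p : ↥A, m ∈ A → (p ∈ t ∧ wp p ∈ seg m.1 m.2) := by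
    intro m
    by_cases hm : m ∈ A
    · obtain ⟨p, h1, h2⟩ := hwall_seg m hm
      exact ⟨p, fun _ => ⟨h1, h2⟩⟩
    · exact ⟨⟨hAne.choose, hAne.choose_spec⟩, fun h => absurd h hm⟩
  choose ψ hψ using hws
  have hbound : ∀ F, good F → F.card ≤ t.card := by
    intro F hF
    apply Finset.card_le_card_of_injOn ψ
    · intro m hm
      exact (hψ m (hF.1 m hm)).1
    · intro m hm m' hm' he
      simp only [Finset.mem_coe] at hm hm'
      by_contra hne
      have hd := hF.2 m hm m' hm' hne
      have h1 := (hψ m (hF.1 m hm)).2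
      have h2 := (hψ m' (hF.1 m' hm')).2
      rw [he] at h1
      exact hd.ne_of_mem h1 h2 rfl
  -- maximal disjoint family
  set cards : Set ℕ := {n | ∃ F, good F ∧ F.card = n} with hcards
  have h1card : (1 : ℕ) ∈ cards := by
    refine ⟨{(x, y)}, ⟨?_, ?_⟩, Finset.card_singleton _⟩
    · intro m hm
      rw [Finset.mem_singleton] at hm
      subst hm
      exact subset_closure ⟨1, by simp⟩
    · intro m hm m' hm' hne
      rw [Finset.mem_singleton] at hm hm'
      exact absurd (hm.trans hm'.symm) hne
  have hcne : cards.Nonempty := ⟨1, h1card⟩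
  have hbdd : BddAbove cards := by
    refine ⟨t.card, ?_⟩
    rintro n ⟨F, hF, rfl⟩
    exact hbound F hF
  obtain ⟨F₀, hF₀good, hF₀card⟩ := Nat.sSup_mem hcne hbdd
  have hmax : ∀ F, good F → F.card ≤ sSup cards := fun F hF => le_csSup hbdd ⟨F, hF, rfl⟩
  have hF₀ne : F₀.Nonempty := by
    rw [← Finset.card_pos, hF₀card]
    have := le_csSup hbdd h1card
    omega
  set Y : Set X := ⋃ m ∈ F₀, seg m.1 m.2 with hY
  have hYc : IsClosed Y := Set.Finite.isClosed_biUnion F₀.finite_toSet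
    (fun m _ => isClosed_seg _ _)
  have hYne : Y.Nonempty := by
    obtain ⟨m, hm⟩ := hF₀ne
    exact ⟨m.1, Set.mem_biUnion hm (left_mem_seg _ _)⟩
  -- maximality: every pair of A has segment meeting Y
  have hmeet : ∀ m ∈ A, (seg m.1 m.2 ∩ Y).Nonempty := by
    intro m hm
    by_contra hd
    rw [Set.not_nonempty_iff_eq_empty] at hd
    have hdisj : ∀ m' ∈ F₀, Disjoint (seg m.1 m.2) (seg m'.1 m'.2) := by
      intro m' hm'
      rw [Set.disjoint_iff_inter_eq_empty]
      apply Set.eq_empty_of_subset_empty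
      rw [← hd]
      apply Set.inter_subset_inter_right
      exact fun z hz => Set.mem_biUnion hm' hz
    have hmF₀ : m ∉ F₀ := by
      intro hmF
      have h1 : m.1 ∈ seg m.1 m.2 ∩ Y :=
        ⟨left_mem_seg _ _, Set.mem_biUnion hmF (left_mem_seg _ _)⟩
      rw [hd] at h1
      exact h1
    have hgood' : good (insert m F₀) := by
      constructor
      · intro m' hm'
        rcases Finset.mem_insert.mp hm' with rfl | hm'
        · exact hm
        · exact hF₀good.1 m' hm'
      · intro m₁ h₁ m₂ h₂ hne
        rcases Finset.mem_insert.mp h₁ with he₁ | h₁'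
        · rcases Finset.mem_insert.mp h₂ with he₂ | h₂'
          · exact absurd (he₁.trans he₂.symm) hne
          · rw [he₁]; exact hdisj m₂ h₂'
        · rcases Finset.mem_insert.mp h₂ with he₂ | h₂'
          · rw [he₂]; exact (hdisj m₁ h₁').symm
          · exact hF₀good.2 m₁ h₁' m₂ h₂' hne
    have hle := hmax _ hgood'
    rw [Finset.card_insert_of_notMem hmF₀, hF₀card] at hle
    omega
  -- the hull of Y
  set Hl : Set X := ⋂₀ {C : Set X | IsClosed C ∧ IsPreconnected C ∧ Y ⊆ C} with hHl
  have hHlc : IsClosed Hl := isClosed_sInter fun C hC => hC.1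
  have hHlY : Y ⊆ Hl := fun z hz C hC => hC.2.2 hz
  have hHlsegcl : ∀ u ∈ Hl, ∀ v ∈ Hl, seg u v ⊆ Hl := by
    intro u hu v hv z hz C hC
    exact seg_subset hC.1 hC.2.1 (hu C hC) (hv C hC) hz
  have hHlp : IsPreconnected Hl :=
    preconn_of_segClosed hsep (hYne.mono hHlY) hHlsegcl
  -- translates of Hl pairwise intersect
  have hYtrans : ∀ g : G, (((fun z : X => g • z) '' Y) ∩ Y).Nonempty := by
    intro g
    obtain ⟨m, hm⟩ := hF₀ne
    have hmA : m ∈ A := hF₀good.1 m hm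
    have hgmA : ((g • m.1, g • m.2) : X × X) ∈ A := hmapA g m hmA
    obtain ⟨z, hz1, hz2⟩ := hmeet _ hgmA
    refine ⟨z, ?_, hz2⟩
    have hseg : seg (g • m.1) (g • m.2) = (fun z : X => g • z) '' seg m.1 m.2 :=
      (seg_smul g _ _).symm
    rw [hseg] at hz1
    obtain ⟨z', hz', rfl⟩ := hz1
    exact ⟨z', Set.mem_biUnion hm hz', rfl⟩
  have hHtrans : ∀ g : G, (((fun z : X => g • z) '' Hl) ∩ Hl).Nonempty := by
    intro g
    obtain ⟨z, hz1, hz2⟩ := hYtrans g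
    exact ⟨z, Set.image_mono hHlY hz1, hHlY hz2⟩
  have hpairH : ∀ g g' : G,
      (((fun z : X => g • z) '' Hl) ∩ ((fun z : X => g' • z) '' Hl)).Nonempty := by
    intro g g'
    obtain ⟨z, hz1, hz2⟩ := hHtrans (g'⁻¹ * g)
    refine ⟨g' • z, ?_, Set.mem_image_of_mem _ hz2⟩
    have h1 := Set.mem_image_of_mem (fun z : X => g' • z) hz1
    rw [image_smul_comp] at h1
    simp only [mul_inv_cancel_left] at h1
    exact h1
  -- the invariant core
  set Zc : Set X := ⋂ g : G, (fun z : X => g • z) '' Hl with hZc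
  have hHlimg_closed : ∀ g : G, IsClosed ((fun z : X => g • z) '' Hl) := by
    intro g
    exact (Homeomorph.smul g (α := X)).isClosedMap _ hHlc
  have hHlimg_preconn : ∀ g : G, IsPreconnected ((fun z : X => g • z) '' Hl) :=
    fun g => hHlp.image _ (continuous_const_smul g).continuousOn
  have hZcne : Zc.Nonempty := helly_family hsep _ hHlimg_closed hHlimg_preconn hpairH
  have hZcc : IsClosed Zc := isClosed_iInter fun g => hHlimg_closed g
  have hZcsub : Zc ⊆ Hl := by
    intro z hz
    have h1 := Set.mem_iInter.mp hz 1
    simpa [one_smul, Set.image_id'] using h1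
  have hZcinv : ∀ h : G, (fun z : X => h • z) '' Zc = Zc := by
    intro h
    have hbij : Function.Bijective (fun z : X => h • z) := MulAction.bijective h
    rw [hZc, Set.image_iInter hbij]
    have hcomp : ∀ g : G, (fun z : X => h • z) '' ((fun z : X => g • z) '' Hl)
        = (fun z : X => (h * g) • z) '' Hl := fun g => image_smul_comp h g Hl
    apply Set.Subset.antisymm
    · intro z hz
      rw [Set.mem_iInter] at hz ⊢
      intro g
      have h1 := hz (h⁻¹ * g)
      rw [hcomp] at h1
      simpa [mul_inv_cancel_left] using h1
    · intro z hz
      rw [Set.mem_iInter] at hz ⊢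
      intro g
      rw [hcomp]
      exact hz (h * g)
  -- Hl is contained in a finite union of segments
  obtain ⟨m₀, hm₀⟩ := hF₀ne
  set a₀ : X := m₀.1 with ha₀
  set H' : Set X := ⋃ m ∈ F₀, (seg m.1 m.2 ∪ seg a₀ m.1) with hH'
  have hH'c : IsClosed H' := Set.Finite.isClosed_biUnion F₀.finite_toSet
    (fun m _ => (isClosed_seg _ _).union (isClosed_seg _ _))
  have hH'p : IsPreconnected H' := by
    have heq : H' = ⋃₀ ((fun m : X × X => seg m.1 m.2 ∪ seg a₀ m.1) '' (F₀ : Set (X × X))) := by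
      rw [Set.sUnion_image]
      ext z
      simp [hH']
    rw [heq]
    apply isPreconnected_sUnion a₀
    · rintro s ⟨m, hm, rfl⟩
      exact Or.inr (left_mem_seg _ _)
    · rintro s ⟨m, hm, rfl⟩
      exact IsPreconnected.union m.1 (left_mem_seg _ _) (right_mem_seg _ _)
        (isPreconnected_seg hsep _ _) (isPreconnected_seg hsep _ _)
  have hH'Y : Y ⊆ H' := by
    intro z hz
    rw [hY, Set.mem_iUnion₂] at hz
    obtain ⟨m, hm, hz'⟩ := hz
    rw [hH', Set.mem_iUnion₂]
    exact ⟨m, hm, Or.inl hz'⟩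
  have hHlH' : Hl ⊆ H' := Set.sInter_subset_of_mem ⟨hH'c, hH'p, hH'Y⟩
  -- extreme points of the core
  have hExt_ne : (Ext Zc).Nonempty := ext_nonempty hsep hZcc hZcne
  have hExtFin : (Ext Zc).Finite := by
    have hsub : Ext Zc ⊆ ⋃ m ∈ F₀, ((Ext Zc ∩ seg m.1 m.2) ∪ (Ext Zc ∩ seg a₀ m.1)) := by
      intro e he
      have h1 : e ∈ H' := hHlH' (hZcsub (ext_subset _ he))
      rw [hH', Set.mem_iUnion₂] at h1
      obtain ⟨m, hm, h2⟩ := h1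
      rw [Set.mem_iUnion₂]
      rcases h2 with h2 | h2
      · exact ⟨m, hm, Or.inl ⟨he, h2⟩⟩
      · exact ⟨m, hm, Or.inr ⟨he, h2⟩⟩
    apply Set.Finite.subset _ hsub
    apply Set.Finite.biUnion F₀.finite_toSet
    intro m _
    apply Set.Finite.union
    · apply finite_of_no_three
      intro z₁ h₁ z₂ h₂ z₃ h₃ h12 h13 h23
      exact ext_no_three hsep h₁.1 h₂.1 h₃.1 h₁.2 h₂.2 h₃.2 h12 h13 h23
    · apply finite_of_no_three
      intro z₁ h₁ z₂ h₂ z₃ h₃ h12 h13 h23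
      exact ext_no_three hsep h₁.1 h₂.1 h₃.1 h₁.2 h₂.2 h₃.2 h12 h13 h23
  -- extreme points are invariant under the action
  have hExtinv : ∀ g : G, ∀ e ∈ Ext Zc, g • e ∈ Ext Zc := by
    intro g e he
    constructor
    · rw [← hZcinv g]
      exact Set.mem_image_of_mem _ he.1
    · intro r hr r' hr' hmem
      have h1 : e ∈ seg (g⁻¹ • r) (g⁻¹ • r') := by
        have h2 := Set.mem_image_of_mem (fun z : X => (g⁻¹ : G) • z) hmem
        rw [seg_smul] at h2
        simpa [inv_smul_smul] using h2
      have hrZ : (g⁻¹ : G) • r ∈ Zc := by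
        rw [← hZcinv (g⁻¹ : G)]
        exact Set.mem_image_of_mem _ hr
      have hr'Z : (g⁻¹ : G) • r' ∈ Zc := by
        rw [← hZcinv (g⁻¹ : G)]
        exact Set.mem_image_of_mem _ hr'
      rcases he.2 _ hrZ _ hr'Z h1 with h | h
      · left
        rw [h, smul_inv_smul]
      · right
        rw [h, smul_inv_smul]
  obtain ⟨e, he⟩ := hExt_ne
  have horbsub : MulAction.orbit G e ⊆ Ext Zc := by
    rintro z ⟨g, rfl⟩
    exact hExtinv g e he
  exact ((horb e).mono horbsub) hExtFin
end
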